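/- arXiv:math/9911026 — 6 statements merged into one kernel-verified Lean document; each statement's English description precedes it below -/
import Mathlib

section
/- For f, g ∈ L²(ℝ) and a > 0, the series ∑_{n∈ℤ} f(t−na)·conj(g(t−na)) converges absolutely for almost every t, and the resulting a-periodic function, restricted to [0,a], belongs to L¹[0,a]. -/
open MeasureTheory Set Filter Topology
open scoped ENNReal NNReal

lemma key_lintegral (a : ℝ) (ha : 0 < a) (h : ℝ → ℝ≥0∞) (hm : Measurable h) :
    ∫⁻ t in Set.Ioc 0 a, ∑' n : ℤ, h (t - n * a) ∂volume = ∫⁻ t, h t ∂volume := by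
  rw [lintegral_tsum (f := fun (n : ℤ) (t : ℝ) => h (t - n * a)) (fun n => (hm.comp (measurable_id.sub_const ((n : ℝ) * a))).aemeasurable)]
  have step : ∀ n : ℤ, ∫⁻ t in Set.Ioc 0 a, h (t - n * a) ∂volume
      = ∫⁻ t in Set.Ioc ((-n : ℤ) * a) ((-n : ℤ) * a + a), h t ∂volume := by
    intro n
    have hmp : MeasurePreserving (fun t : ℝ => t - (n : ℝ) * a) volume volume :=
      measurePreserving_sub_right volume _
    have hemb : MeasurableEmbedding (fun t : ℝ => t - (n : ℝ) * a) :=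
      (MeasurableEquiv.subRight ((n : ℝ) * a)).measurableEmbedding
    have hpre : (fun t : ℝ => t - (n : ℝ) * a) ⁻¹' Set.Ioc (((-n : ℤ) : ℝ) * a) (((-n : ℤ) : ℝ) * a + a)
        = Set.Ioc 0 a := by
      ext t
      simp only [Set.mem_preimage, Set.mem_Ioc, Int.cast_neg]
      constructor <;> rintro ⟨h1, h2⟩ <;> constructor <;> linarith
    rw [← hpre, hmp.setLIntegral_comp_preimage_emb hemb]
  simp_rw [step]
  rw [← (Equiv.neg ℤ).tsum_eq (fun n : ℤ => ∫⁻ t in Set.Ioc (((-n : ℤ) : ℝ) * a) (((-n : ℤ) : ℝ) * a + a), h t ∂volume)]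
  simp only [Equiv.neg_apply, neg_neg]
  have hsets : (fun n : ℤ => Set.Ioc (((n : ℤ) : ℝ) * a) (((n : ℤ) : ℝ) * a + a))
      = fun n : ℤ => Set.Ioc (n • a) ((n + 1) • a) := by
    funext n
    rw [zsmul_eq_mul, zsmul_eq_mul]
    push_cast
    ring_nf
  rw [← lintegral_iUnion (fun n : ℤ => measurableSet_Ioc) ?_ h]
  · rw [show (⋃ n : ℤ, Set.Ioc (((n : ℤ) : ℝ) * a) (((n : ℤ) : ℝ) * a + a)) = Set.univ from by
      rw [hsets]; exact iUnion_Ioc_zsmul ha, Measure.restrict_univ]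
  · have hd := pairwise_disjoint_Ioc_add_zsmul (0 : ℝ) a
    simp only [zero_add] at hd
    rw [hsets]; exact hd

/-- The a-inner product: `⟨f,g⟩_a(t) = ∑_{n∈ℤ} f(t−na)·conj(g(t−na))`. -/
noncomputable def aInner (a : ℝ) (f g : ℝ → ℂ) (t : ℝ) : ℂ :=
  ∑' n : ℤ, f (t - n * a) * (starRingEnd ℂ) (g (t - n * a))

/-- For f, g ∈ L²(ℝ) and a > 0, the series defining the a-inner product converges
absolutely for a.e. t, and the resulting function restricted to (0,a] is in L¹. -/
theorem stmt0 (a : ℝ) (ha : 0 < a) (f g : ℝ → ℂ)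
    (hf : MemLp f 2 (volume : Measure ℝ)) (hg : MemLp g 2 (volume : Measure ℝ)) :
    (∀ᵐ t : ℝ ∂volume,
        Summable fun n : ℤ => ‖f (t - n * a) * (starRingEnd ℂ) (g (t - n * a))‖) ∧
      IntegrableOn (aInner a f g) (Set.Ioc 0 a) volume := by
  -- measurable representatives
  set f' : ℝ → ℂ := hf.1.mk f with hf'def
  set g' : ℝ → ℂ := hg.1.mk g with hg'def
  have hf'm : Measurable f' := hf.1.stronglyMeasurable_mk.measurable
  have hg'm : Measurable g' := hg.1.stronglyMeasurable_mk.measurable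
  have hf'eq : f =ᵐ[volume] f' := hf.1.ae_eq_mk
  have hg'eq : g =ᵐ[volume] g' := hg.1.ae_eq_mk
  -- agreement on all translates, a.e.
  have hE : ∀ᵐ t : ℝ ∂volume, ∀ n : ℤ,
      f (t - n * a) = f' (t - n * a) ∧ g (t - n * a) = g' (t - n * a) := by
    rw [ae_all_iff]
    intro n
    have hqmp := (measurePreserving_sub_right (volume : Measure ℝ)
      ((n : ℝ) * a)).quasiMeasurePreserving
    filter_upwards [hqmp.ae_eq_comp hf'eq, hqmp.ae_eq_comp hg'eq] with t h1 h2
    exact ⟨h1, h2⟩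
  -- the ENNReal majorant
  set h : ℝ → ℝ≥0∞ := fun t => (‖f' t‖₊ : ℝ≥0∞) * (‖g' t‖₊ : ℝ≥0∞) with hdef
  have hhm : Measurable h :=
    (measurable_coe_nnreal_ennreal.comp hf'm.nnnorm).mul
      (measurable_coe_nnreal_ennreal.comp hg'm.nnnorm)
  set H : ℝ → ℝ≥0∞ := fun t => ∑' n : ℤ, h (t - n * a) with Hdef
  have hHm : Measurable H :=
    Measurable.ennreal_tsum fun n => hhm.comp (measurable_id.sub_const _)
  -- finiteness of ∫ h
  have hfin : ∫⁻ t, h t ∂volume < ∞ := by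
    have hconj : Real.HolderConjugate 2 2 := Real.holderConjugate_iff.mpr ⟨one_lt_two, by norm_num⟩
    have hle := ENNReal.lintegral_mul_le_Lp_mul_Lq volume hconj
      (measurable_coe_nnreal_ennreal.comp hf'm.nnnorm).aemeasurable
      (measurable_coe_nnreal_ennreal.comp hg'm.nnnorm).aemeasurable
    have hf2 : eLpNorm f' 2 volume < ∞ := (hf.ae_eq hf'eq).2
    have hg2 : eLpNorm g' 2 volume < ∞ := (hg.ae_eq hg'eq).2
    rw [eLpNorm_eq_lintegral_rpow_enorm_toReal two_ne_zero ENNReal.ofNat_ne_top] at hf2 hg2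
    norm_num at hf2 hg2
    refine lt_of_le_of_lt hle ?_
    exact ENNReal.mul_lt_top (by simpa [enorm_eq_nnnorm] using hf2) (by simpa [enorm_eq_nnnorm] using hg2)
  -- key identity
  have hkey : ∫⁻ t in Set.Ioc 0 a, H t ∂volume = ∫⁻ t, h t ∂volume :=
    key_lintegral a ha h hhm
  -- a.e. finiteness of H on ℝ
  have hS0 : volume ({t : ℝ | H t = ∞} ∩ Set.Ioc 0 a) = 0 := by
    have hrest : ∀ᵐ t ∂(volume.restrict (Set.Ioc 0 a)), H t < ∞ :=
      ae_lt_top hHm (by rw [hkey]; exact hfin.ne)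
    rw [ae_iff] at hrest
    simp only [not_lt, top_le_iff] at hrest
    rwa [Measure.restrict_apply (show MeasurableSet {t : ℝ | H t = ∞} from
      hHm (measurableSet_singleton ∞))] at hrest
  have Hper : ∀ (k : ℤ) (t : ℝ), H (t - k * a) = H t := by
    intro k t
    have h1 : ∀ n : ℤ, h (t - ((k + n : ℤ) : ℝ) * a) = h ((t - k * a) - n * a) := by
      intro n; congr 1; push_cast; ring
    calc H (t - k * a) = ∑' n : ℤ, h ((t - k * a) - n * a) := rfl
      _ = ∑' n : ℤ, h (t - ((k + n : ℤ) : ℝ) * a) := tsum_congr fun n => (h1 n).symm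
      _ = ∑' n : ℤ, h (t - n * a) := (Equiv.addLeft k).tsum_eq fun m : ℤ => h (t - m * a)
      _ = H t := rfl
  have hHae : ∀ᵐ t : ℝ ∂volume, H t ≠ ∞ := by
    have hSm : MeasurableSet {t : ℝ | H t = ∞} := hHm (measurableSet_singleton ∞)
    have hcover : {t : ℝ | H t = ∞} ⊆
        ⋃ k : ℤ, (fun t : ℝ => t - (k : ℝ) * a) ⁻¹' ({t : ℝ | H t = ∞} ∩ Set.Ioc 0 a) := by
      intro t ht
      set k : ℤ := ⌈t / a⌉ - 1 with hk
      refine Set.mem_iUnion.mpr ⟨k, ⟨?_, ?_, ?_⟩⟩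
      · show H (t - k * a) = ∞
        rw [Hper k t]; exact ht
      · show (0 : ℝ) < t - (k : ℝ) * a
        have h1 : (k : ℝ) < t / a := by
          have := Int.ceil_lt_add_one (t / a)
          push_cast [hk]; linarith
        have := (lt_div_iff₀ ha).mp h1
        linarith
      · show t - (k : ℝ) * a ≤ a
        have h1 : t / a ≤ (k : ℝ) + 1 := by
          have := Int.le_ceil (t / a)
          push_cast [hk]; linarith
        have h2 := (div_le_iff₀ ha).mp h1
        have h3 : ((k : ℝ) + 1) * a = (k : ℝ) * a + a := by ring
        linarith
    have hnull : ∀ k : ℤ,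
        volume ((fun t : ℝ => t - (k : ℝ) * a) ⁻¹' ({t : ℝ | H t = ∞} ∩ Set.Ioc 0 a)) = 0 := by
      intro k
      rw [(measurePreserving_sub_right volume ((k : ℝ) * a)).measure_preimage
        (hSm.inter measurableSet_Ioc).nullMeasurableSet]
      exact hS0
    have hSnull : volume {t : ℝ | H t = ∞} = 0 :=
      measure_mono_null hcover (measure_iUnion_null hnull)
    rw [ae_iff]
    simpa only [ne_eq, not_not] using hSnull
  -- good set
  have hGood : ∀ᵐ t : ℝ ∂volume, (∀ n : ℤ,
      f (t - n * a) = f' (t - n * a) ∧ g (t - n * a) = g' (t - n * a)) ∧ H t ≠ ∞ :=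
    hE.and hHae
  -- pointwise summability of nnnorms on the good set
  have hsum_nn : ∀ t : ℝ,
      (∀ n : ℤ, f (t - n * a) = f' (t - n * a) ∧ g (t - n * a) = g' (t - n * a)) →
      H t ≠ ∞ →
      Summable (fun n : ℤ => (‖f (t - n * a)‖₊ * ‖g (t - n * a)‖₊ : ℝ≥0)) := by
    intro t hag hHt
    rw [← ENNReal.tsum_coe_ne_top_iff_summable]
    have : (∑' n : ℤ, ((‖f (t - n * a)‖₊ * ‖g (t - n * a)‖₊ : ℝ≥0) : ℝ≥0∞)) = H t :=
      tsum_congr fun n => by rw [(hag n).1, (hag n).2, ENNReal.coe_mul]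
    rw [this]; exact hHt
  have hnorm : ∀ x y : ℂ, ‖x * (starRingEnd ℂ) y‖ = ((‖x‖₊ * ‖y‖₊ : ℝ≥0) : ℝ) := by
    intro x y
    rw [norm_mul, starRingEnd_apply, norm_star, NNReal.coe_mul, coe_nnnorm, coe_nnnorm]
  have part1 : ∀ᵐ t : ℝ ∂volume,
      Summable fun n : ℤ => ‖f (t - n * a) * (starRingEnd ℂ) (g (t - n * a))‖ := by
    filter_upwards [hGood] with t ht
    obtain ⟨hag, hHt⟩ := ht
    have h2 : Summable (fun n : ℤ => ((‖f (t - n * a)‖₊ * ‖g (t - n * a)‖₊ : ℝ≥0) : ℝ)) :=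
      NNReal.summable_coe.mpr (hsum_nn t hag hHt)
    exact h2.congr fun n => (hnorm _ _).symm
  refine ⟨part1, ?_⟩
  -- a.e. pointwise limit of measurable partial sums
  have htendae : ∀ᵐ t : ℝ ∂volume, Tendsto (fun N : ℕ => ∑ n ∈ Finset.Icc (-(N : ℤ)) (N : ℤ),
      f' (t - n * a) * (starRingEnd ℂ) (g' (t - n * a))) atTop (𝓝 (aInner a f g t)) := by
    filter_upwards [hGood] with t ht
    obtain ⟨hag, hHt⟩ := ht
    have hsn : Summable fun n : ℤ => ‖f (t - n * a) * (starRingEnd ℂ) (g (t - n * a))‖ := by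
      have h2 : Summable (fun n : ℤ => ((‖f (t - n * a)‖₊ * ‖g (t - n * a)‖₊ : ℝ≥0) : ℝ)) :=
        NNReal.summable_coe.mpr (hsum_nn t hag hHt)
      exact h2.congr fun n => (hnorm _ _).symm
    have hsC : Summable (fun n : ℤ => f (t - n * a) * (starRingEnd ℂ) (g (t - n * a))) :=
      hsn.of_norm
    have hhs : HasSum (fun n : ℤ => f (t - n * a) * (starRingEnd ℂ) (g (t - n * a)))
        (aInner a f g t) := hsC.hasSum
    have hmono : Monotone fun N : ℕ => Finset.Icc (-(N : ℤ)) (N : ℤ) := by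
      intro N M hNM
      exact Finset.Icc_subset_Icc (by exact_mod_cast neg_le_neg (Int.ofNat_le.mpr hNM))
        (by exact_mod_cast Int.ofNat_le.mpr hNM)
    have hcof : ∀ x : ℤ, ∃ N : ℕ, x ∈ Finset.Icc (-(N : ℤ)) (N : ℤ) := by
      intro x
      exact ⟨x.natAbs, by simp only [Finset.mem_Icc]; omega⟩
    have hfinset := tendsto_atTop_finset_of_monotone hmono hcof
    have htd := hhs.comp hfinset
    refine htd.congr fun N => ?_
    refine Finset.sum_congr rfl fun n _ => ?_
    simp only [(hag n).1, (hag n).2]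
  have haesm : AEStronglyMeasurable (aInner a f g) volume := by
    refine aestronglyMeasurable_of_tendsto_ae atTop (fun N => ?_) htendae
    refine Measurable.aestronglyMeasurable ?_
    refine Finset.measurable_sum _ fun n _ => ?_
    exact (hf'm.comp (measurable_id.sub_const _)).mul
      (continuous_star.measurable.comp (hg'm.comp (measurable_id.sub_const _)))
  refine ⟨haesm.restrict, ?_⟩
  rw [hasFiniteIntegral_def]
  have hbound : ∀ᵐ t ∂volume.restrict (Set.Ioc 0 a),
      (‖aInner a f g t‖₊ : ℝ≥0∞) ≤ H t := by
    refine ae_restrict_of_ae (hGood.mono ?_)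
    rintro t ⟨hag, hHt⟩
    have hsum' := hsum_nn t hag hHt
    have hnorms : Summable (fun n : ℤ =>
        ‖f (t - n * a) * (starRingEnd ℂ) (g (t - n * a))‖₊) := by
      have : (fun n : ℤ => ‖f (t - n * a) * (starRingEnd ℂ) (g (t - n * a))‖₊)
          = fun n : ℤ => (‖f (t - n * a)‖₊ * ‖g (t - n * a)‖₊ : ℝ≥0) := by
        funext n
        rw [nnnorm_mul, starRingEnd_apply, nnnorm_star]
      rw [this]; exact hsum'
    calc (‖aInner a f g t‖₊ : ℝ≥0∞)
        ≤ ((∑' n : ℤ, ‖f (t - n * a) * (starRingEnd ℂ) (g (t - n * a))‖₊ : ℝ≥0) : ℝ≥0∞) :=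
          ENNReal.coe_le_coe.mpr (nnnorm_tsum_le hnorms)
      _ = ∑' n : ℤ, (‖f (t - n * a) * (starRingEnd ℂ) (g (t - n * a))‖₊ : ℝ≥0∞) :=
          ENNReal.coe_tsum hnorms
      _ = H t := by
          refine tsum_congr fun n => ?_
          rw [nnnorm_mul, ENNReal.coe_mul, (hag n).1, (hag n).2]
          congr 1
          rw [starRingEnd_apply, nnnorm_star]
  calc ∫⁻ t in Set.Ioc 0 a, (‖aInner a f g t‖₊ : ℝ≥0∞) ∂volume
      ≤ ∫⁻ t in Set.Ioc 0 a, H t ∂volume := lintegral_mono_ae hbound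
    _ = ∫⁻ t, h t ∂volume := hkey
    _ < ∞ := hfin
end

section
/- If g ∈ L²(ℝ), a > 0, and ‖g‖_a(t) = 1 for almost every t, then the family ((1/√a)·E_{m/a} g)_{m∈ℤ} is an orthonormal sequence in L²(ℝ). -/
open MeasureTheory

noncomputable abbrev expc (r t : ℝ) : ℂ := Complex.exp ((r * t : ℝ) * Complex.I)

lemma expc_norm (r t : ℝ) : ‖expc r t‖ = 1 := Complex.norm_exp_ofReal_mul_I _

lemma expc_continuous (r : ℝ) : Continuous (expc r) := by
  fun_prop

lemma integrable_expc_mul (r : ℝ) {g : ℝ → ℂ} (hg : MemLp g 2 (volume : Measure ℝ)) :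
    Integrable (fun t => expc r t * ((‖g t‖ ^ 2 : ℝ) : ℂ)) volume := by
  have h2 : Integrable (fun t => (‖g t‖ ^ 2 : ℝ)) volume := by
    have := hg.integrable_norm_rpow (by norm_num) (by norm_num)
    refine this.congr (Filter.Eventually.of_forall fun t => ?_)
    show ‖g t‖ ^ ((2:ENNReal).toReal) = ‖g t‖ ^ 2
    rw [← Real.rpow_natCast ‖g t‖ 2]
    norm_num
  have h2' : Integrable (fun t => ((‖g t‖ ^ 2 : ℝ) : ℂ)) volume := h2.ofReal
  exact h2'.bdd_mul (expc_continuous r).aestronglyMeasurable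
    (Filter.Eventually.of_forall fun t => le_of_eq (expc_norm r t))

/-- Periodization of an integral over ℝ. -/
lemma integral_periodize (a : ℝ) (ha : 0 < a) (F : ℝ → ℂ) (hF : Integrable F volume) :
    ∫ x, F x = ∫ x in Set.Ioc 0 (0 + a), ∑' γ : AddSubgroup.zmultiples a, F ((γ : ℝ) + x) := by
  have hfd := isAddFundamentalDomain_Ioc ha 0 (volume : Measure ℝ)
  have h1 : ∫ x, F x = ∑' γ : AddSubgroup.zmultiples a,
      ∫ x in Set.Ioc 0 (0 + a), F ((γ : ℝ) + x) := by
    exact hfd.integral_eq_tsum'' F hF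
  rw [h1]
  refine (integral_tsum ?_ ?_).symm
  · intro γ
    have : AEStronglyMeasurable (fun x => F ((γ : ℝ) + x)) volume := by
      exact (measurePreserving_add_left volume (γ : ℝ)).aestronglyMeasurable_comp_iff
        (MeasurableEquiv.addLeft (γ : ℝ)).measurableEmbedding |>.mpr hF.1
    exact this.restrict
  · have h2 : ∑' γ : AddSubgroup.zmultiples a,
        ∫⁻ x in Set.Ioc 0 (0 + a), ‖F ((γ : ℝ) + x)‖ₑ = ∫⁻ x, ‖F x‖ₑ := by
      exact (hfd.lintegral_eq_tsum'' (fun x => (‖F x‖ₑ : ENNReal))).symm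
    rw [h2]
    exact hF.2.ne

set_option maxHeartbeats 1000000 in
noncomputable def zequiv (a : ℝ) (ha : 0 < a) : ℤ ≃ AddSubgroup.zmultiples a :=
  Equiv.ofBijective
    (Set.codRestrict (fun n : ℤ => n • a) (AddSubgroup.zmultiples a)
      fun n => AddSubgroup.zsmul_mem_zmultiples a n)
    ((Equiv.ofInjective (fun n : ℤ => n • a) (zsmul_left_strictMono ha).injective).bijective)

set_option maxHeartbeats 1000000 in
lemma zequiv_coe (a : ℝ) (ha : 0 < a) (n : ℤ) : ((zequiv a ha n : ℝ)) = n * a := by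
  exact zsmul_eq_mul a n

lemma expc_add (r x y : ℝ) : expc r (x + y) = expc r x * expc r y := by
  unfold expc
  rw [← Complex.exp_add]
  congr 1
  push_cast
  ring

/-- If `‖g‖_a = 1` a.e., then `((1/√a) E_{m/a} g)_{m∈ℤ}` is orthonormal in L²(ℝ). -/
theorem stmt8 (a : ℝ) (ha : 0 < a) (g : ℝ → ℂ)
    (hg : MemLp g 2 (volume : Measure ℝ))
    (hnorm : ∀ᵐ t : ℝ ∂volume, ∑' n : ℤ, ‖g (t - n * a)‖ ^ 2 = 1) :
    ∀ m k : ℤ,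
      ∫ t : ℝ,
        ((Real.sqrt a : ℂ)⁻¹ *
            Complex.exp (2 * Real.pi * Complex.I * ((m : ℂ) / (a : ℂ)) * (t : ℂ)) * g t) *
          (starRingEnd ℂ)
            ((Real.sqrt a : ℂ)⁻¹ *
              Complex.exp (2 * Real.pi * Complex.I * ((k : ℂ) / (a : ℂ)) * (t : ℂ)) * g t)
        = if m = k then 1 else 0 := by
  intro m k
  have ha0 : (a : ℝ) ≠ 0 := ne_of_gt ha
  set c : ℝ := 2 * Real.pi * ((m - k : ℤ) : ℝ) / a with hc
  set F : ℝ → ℂ := fun t => expc c t * ((‖g t‖ ^ 2 : ℝ) : ℂ) with hF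
  -- Step 1: pointwise simplification of the integrand
  have hpt : ∀ t : ℝ,
      ((Real.sqrt a : ℂ)⁻¹ *
          Complex.exp (2 * Real.pi * Complex.I * ((m : ℂ) / (a : ℂ)) * (t : ℂ)) * g t) *
        (starRingEnd ℂ)
          ((Real.sqrt a : ℂ)⁻¹ *
            Complex.exp (2 * Real.pi * Complex.I * ((k : ℂ) / (a : ℂ)) * (t : ℂ)) * g t)
      = (a : ℂ)⁻¹ * F t := by
    intro t
    have e1 : Complex.exp (2 * Real.pi * Complex.I * ((m : ℂ) / (a : ℂ)) * (t : ℂ))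
        = expc (2 * Real.pi * (m : ℝ) / a) t := by
      unfold expc; congr 1; push_cast; ring
    have e2 : Complex.exp (2 * Real.pi * Complex.I * ((k : ℂ) / (a : ℂ)) * (t : ℂ))
        = expc (2 * Real.pi * (k : ℝ) / a) t := by
      unfold expc; congr 1; push_cast; ring
    have econj : ∀ r : ℝ, (starRingEnd ℂ) (expc r t) = expc (-r) t := by
      intro r
      unfold expc
      rw [← Complex.exp_conj]
      congr 1
      simp [Complex.conj_ofReal]
    have hsqrt : ((Real.sqrt a : ℝ) : ℂ)⁻¹ * (starRingEnd ℂ) ((Real.sqrt a : ℝ) : ℂ)⁻¹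
        = (a : ℂ)⁻¹ := by
      rw [map_inv₀, Complex.conj_ofReal, ← mul_inv, ← Complex.ofReal_mul,
        Real.mul_self_sqrt ha.le]
    have hgg : g t * (starRingEnd ℂ) (g t) = ((‖g t‖ ^ 2 : ℝ) : ℂ) := by
      rw [Complex.mul_conj]
      norm_cast
      rw [Complex.normSq_eq_norm_sq]
    have emul : expc (2 * Real.pi * (m : ℝ) / a) t * expc (-(2 * Real.pi * (k : ℝ) / a)) t
        = expc c t := by
      rw [← Complex.exp_add]
      congr 1
      push_cast [hc]
      field_simp
      ring
    rw [e1, e2]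
    rw [map_mul, map_mul, econj]
    calc ((Real.sqrt a : ℝ) : ℂ)⁻¹ * expc (2 * Real.pi * (m : ℝ) / a) t * g t *
          ((starRingEnd ℂ) ((Real.sqrt a : ℝ) : ℂ)⁻¹ * expc (-(2 * Real.pi * (k : ℝ) / a)) t *
            (starRingEnd ℂ) (g t))
        = (((Real.sqrt a : ℝ) : ℂ)⁻¹ * (starRingEnd ℂ) ((Real.sqrt a : ℝ) : ℂ)⁻¹) *
            ((expc (2 * Real.pi * (m : ℝ) / a) t * expc (-(2 * Real.pi * (k : ℝ) / a)) t) *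
              (g t * (starRingEnd ℂ) (g t))) := by ring
      _ = (a : ℂ)⁻¹ * F t := by rw [hsqrt, hgg, emul]
  simp only [hpt]
  rw [MeasureTheory.integral_const_mul]
  -- Step 2: the integral of F
  have hFint : Integrable F volume := integrable_expc_mul c hg
  have hper := integral_periodize a ha F hFint
  -- a.e. identification of the periodization
  have hae : ∀ᵐ x ∂(volume.restrict (Set.Ioc 0 (0 + a))),
      (∑' γ : AddSubgroup.zmultiples a, F ((γ : ℝ) + x)) = expc c x := by
    refine ae_restrict_of_ae (hnorm.mono fun x hx => ?_)
    have hs : Summable (fun n : ℤ => ‖g (x - n * a)‖ ^ 2) := by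
      by_contra hns
      rw [tsum_eq_zero_of_not_summable hns] at hx
      exact zero_ne_one hx
    have hterm : ∀ n : ℤ, F ((n : ℝ) * a + x) = expc c x * ((‖g (x + n * a)‖ ^ 2 : ℝ) : ℂ) := by
      intro n
      have h1 : expc c ((n : ℝ) * a + x) = expc c x := by
        rw [expc_add]
        have : expc c ((n : ℝ) * a) = 1 := by
          unfold expc
          rw [show ((c * ((n : ℝ) * a) : ℝ) : ℂ) * Complex.I
              = ((m - k) * n : ℤ) * (2 * Real.pi * Complex.I) by
            have haC : (a : ℂ) ≠ 0 := by exact_mod_cast ha0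
            push_cast [hc]; field_simp]
          exact Complex.exp_int_mul_two_pi_mul_I _
        rw [this, one_mul]
      rw [hF]
      simp only []
      rw [h1, show (n : ℝ) * a + x = x + n * a by ring]
    calc (∑' γ : AddSubgroup.zmultiples a, F ((γ : ℝ) + x))
        = ∑' n : ℤ, F (((zequiv a ha n : ℝ)) + x) := ((zequiv a ha).tsum_eq _).symm
      _ = ∑' n : ℤ, expc c x * ((‖g (x + n * a)‖ ^ 2 : ℝ) : ℂ) := by
          refine tsum_congr fun n => ?_
          rw [zequiv_coe, hterm]
      _ = expc c x * ∑' n : ℤ, ((‖g (x + n * a)‖ ^ 2 : ℝ) : ℂ) := tsum_mul_left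
      _ = expc c x := by
          have hre : ∑' n : ℤ, ((‖g (x + n * a)‖ ^ 2 : ℝ) : ℂ)
              = ((∑' n : ℤ, ‖g (x + n * a)‖ ^ 2 : ℝ) : ℂ) := by
            have hs2 : Summable (fun n : ℤ => ‖g (x + n * a)‖ ^ 2) := by
              refine (hs.comp_injective (Equiv.neg ℤ).injective).congr fun n => ?_
              simp [sub_eq_add_neg]
            rw [Complex.ofReal_tsum]
          rw [hre]
          have : (∑' n : ℤ, ‖g (x + n * a)‖ ^ 2 : ℝ) = 1 := by
            rw [← (Equiv.neg ℤ).tsum_eq fun n : ℤ => ‖g (x + n * a)‖ ^ 2]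
            rw [← hx]
            refine tsum_congr fun n => ?_
            simp [sub_eq_add_neg]
          rw [this, Complex.ofReal_one, mul_one]
  rw [hper, MeasureTheory.integral_congr_ae hae]
  -- Step 3: compute the integral of the exponential over the period
  have hexp : (∫ x in Set.Ioc 0 (0 + a), expc c x) = if m = k then (a : ℂ) else 0 := by
    by_cases hmk : m = k
    · simp only [hmk, if_pos rfl]
      have hc0 : c = 0 := by simp [hc, hmk]
      have : ∀ x : ℝ, expc c x = 1 := by
        intro x; simp [expc, hc0]
      simp only [this]
      rw [MeasureTheory.setIntegral_const]
      simp [Real.volume_Ioc, ENNReal.toReal_ofReal ha.le, ha.le]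
    · simp only [if_neg hmk]
      have haC : (a : ℂ) ≠ 0 := by exact_mod_cast ha0
      have hmk' : ((m - k : ℤ) : ℝ) ≠ 0 := by
        exact_mod_cast sub_ne_zero.mpr hmk
      have hc0 : c ≠ 0 := by
        rw [hc]
        exact div_ne_zero (mul_ne_zero (mul_ne_zero two_ne_zero Real.pi_ne_zero) hmk') ha0
      have hcI : ((c : ℝ) : ℂ) * Complex.I ≠ 0 :=
        mul_ne_zero (Complex.ofReal_ne_zero.mpr hc0) Complex.I_ne_zero
      have hfun : ∀ x : ℝ, expc c x = Complex.exp ((((c : ℝ) : ℂ) * Complex.I) * (x : ℂ)) := by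
        intro x; unfold expc; congr 1; push_cast; ring
      have hIoc : (∫ x in Set.Ioc 0 (0 + a), expc c x)
          = ∫ x in (0:ℝ)..(0 + a), Complex.exp ((((c : ℝ) : ℂ) * Complex.I) * (x : ℂ)) := by
        simp only [hfun]
        rw [intervalIntegral.integral_of_le (by linarith : (0:ℝ) ≤ 0 + a)]
      rw [hIoc, integral_exp_mul_complex hcI]
      have h1 : (((c : ℝ) : ℂ) * Complex.I) * (((0:ℝ) + a : ℝ) : ℂ)
          = ((m - k : ℤ) : ℂ) * (2 * Real.pi * Complex.I) := by
        push_cast [hc]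
        field_simp
        ring
      rw [h1, Complex.exp_int_mul_two_pi_mul_I]
      simp
  rw [hexp]
  have haC : (a : ℂ) ≠ 0 := by exact_mod_cast ha0
  by_cases hmk : m = k
  · simp [hmk, inv_mul_cancel₀ haC]
  · simp [hmk]
end

section
/- Let (g_n)_{n∈ℕ} be an a-orthonormal sequence in L²(ℝ) (⟨g_n,g_k⟩_a = 0 a.e. for n≠k, and ‖g_n‖_a = 1 a.e. on the support of ‖g_n‖_a). Then the family (E_{m/a} g_n)_{m,n∈ℤ×ℕ}, suitably normalized by 1/√a, is an orthonormal system in L²(ℝ). -/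
open MeasureTheory

set_option maxHeartbeats 1000000 in
open Complex Set AddSubgroup in
/-- If `(g_n)` is an a-orthonormal sequence, then `((1/√a) E_{m/a} g_n)_{m,n}` is an
orthonormal system in L²(ℝ). -/
theorem stmt9 (a : ℝ) (ha : 0 < a) (g : ℕ → ℝ → ℂ)
    (hg : ∀ n, MemLp (g n) 2 (volume : Measure ℝ))
    (horth : ∀ n k : ℕ, n ≠ k → ∀ᵐ t : ℝ ∂volume, aInner a (g n) (g k) t = 0)
    (hnorm : ∀ n : ℕ, ∀ᵐ t : ℝ ∂volume, aInner a (g n) (g n) t = 1) :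
    ∀ (m k : ℤ) (n j : ℕ),
      ∫ t : ℝ,
        ((Real.sqrt a : ℂ)⁻¹ *
            Complex.exp (2 * Real.pi * Complex.I * ((m : ℂ) / (a : ℂ)) * (t : ℂ)) * g n t) *
          (starRingEnd ℂ)
            ((Real.sqrt a : ℂ)⁻¹ *
              Complex.exp (2 * Real.pi * Complex.I * ((k : ℂ) / (a : ℂ)) * (t : ℂ)) * g j t)
        = if m = k ∧ n = j then 1 else 0 := by
  intro m k n j
  have ha0 : (a : ℂ) ≠ 0 := by exact_mod_cast ha.ne'
  obtain ⟨c, hc⟩ : ∃ c : ℤ, c = m - k := ⟨_, rfl⟩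
  obtain ⟨e, he⟩ : ∃ e : ℝ → ℂ,
      ∀ t : ℝ, e t = Complex.exp (2 * Real.pi * Complex.I * ((c : ℂ) / a) * t) :=
    ⟨_, fun _ => rfl⟩
  obtain ⟨F, hF⟩ : ∃ F : ℝ → ℂ, ∀ t : ℝ, F t = g n t * (starRingEnd ℂ) (g j t) :=
    ⟨_, fun _ => rfl⟩
  -- pointwise simplification
  have hpt : ∀ t : ℝ,
      ((Real.sqrt a : ℂ)⁻¹ *
            Complex.exp (2 * Real.pi * Complex.I * ((m : ℂ) / (a : ℂ)) * (t : ℂ)) * g n t) *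
          (starRingEnd ℂ)
            ((Real.sqrt a : ℂ)⁻¹ *
              Complex.exp (2 * Real.pi * Complex.I * ((k : ℂ) / (a : ℂ)) * (t : ℂ)) * g j t)
        = (a : ℂ)⁻¹ • (e t * F t) := by
    intro t
    have h2 : (starRingEnd ℂ) (Complex.exp (2 * Real.pi * Complex.I * ((k : ℂ) / a) * t))
        = Complex.exp (-(2 * Real.pi * Complex.I * ((k : ℂ) / a) * t)) := by
      rw [← Complex.exp_conj]
      congr 1
      simp only [map_mul, map_div₀, Complex.conj_I, Complex.conj_ofReal, map_intCast,
        map_ofNat]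
      ring
    have hsa : ((Real.sqrt a : ℂ))⁻¹ * ((Real.sqrt a : ℂ))⁻¹ = (a : ℂ)⁻¹ := by
      rw [← mul_inv, ← Complex.ofReal_mul, Real.mul_self_sqrt ha.le]
    have hee : Complex.exp (2 * Real.pi * Complex.I * ((m : ℂ) / a) * t) *
        Complex.exp (-(2 * Real.pi * Complex.I * ((k : ℂ) / a) * t)) = e t := by
      rw [← Complex.exp_add, he]
      congr 1
      push_cast [hc]
      ring
    simp only [map_mul, map_inv₀, Complex.conj_ofReal, h2]
    rw [smul_eq_mul, ← hsa, ← hee, hF]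
    ring
  simp_rw [hpt, integral_smul, smul_eq_mul]
  -- integrability of F
  have hconj : MemLp (fun t => (starRingEnd ℂ) (g j t)) 2 (volume : Measure ℝ) := by
    refine MemLp.of_le (hg j) ?_ (Filter.Eventually.of_forall fun t => by simp)
    exact (Complex.continuous_conj).comp_aestronglyMeasurable (hg j).1
  have hFint : Integrable F (volume : Measure ℝ) := by
    have h1 := MemLp.smul (f := fun t => (starRingEnd ℂ) (g j t)) (φ := g n)
      hconj (hg n) (p := 2) (q := 2) (r := 1)
    have h2 : F = (g n) • (fun t => (starRingEnd ℂ) (g j t)) := by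
      funext t; rw [hF t]; rfl
    rw [h2]
    exact memLp_one_iff_integrable.mp h1
  -- e is continuous and unimodular
  have hecont : Continuous e := by
    rw [funext he]
    exact (continuous_const.mul Complex.continuous_ofReal).cexp
  have henorm : ∀ t : ℝ, ‖e t‖ = 1 := by
    intro t
    have hre : e t = Complex.exp ((2 * Real.pi * ((c : ℝ) / a) * t : ℝ) * Complex.I) := by
      rw [he]; congr 1; push_cast; ring
    rw [hre, Complex.norm_exp_ofReal_mul_I]
  -- the full integrand
  obtain ⟨h, hh⟩ : ∃ h : ℝ → ℂ, ∀ t : ℝ, h t = e t * F t := ⟨_, fun _ => rfl⟩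
  have hInt : Integrable h (volume : Measure ℝ) := by
    rw [funext hh]
    exact hFint.bdd_mul (c := 1) hecont.aestronglyMeasurable (Filter.Eventually.of_forall fun t => (henorm t).le)
  -- periodicity of e
  have hper : ∀ (l : ℤ) (x : ℝ), e (x - l • a) = e x := by
    intro l x
    have hx : (2 * (Real.pi : ℂ) * Complex.I * ((c : ℂ) / a) * ((x - l • a : ℝ) : ℂ))
        = 2 * Real.pi * Complex.I * ((c : ℂ) / a) * x
          + ((-(c * l) : ℤ) * (2 * Real.pi * Complex.I)) := by
      push_cast
      field_simp
      ring
    rw [he, he, hx, Complex.exp_add, Complex.exp_int_mul_two_pi_mul_I, mul_one]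
  -- fundamental domain setup
  haveI : VAddInvariantMeasure (AddSubgroup.zmultiples a) ℝ volume :=
    ⟨fun c s _ => measure_preimage_add _ _ _⟩
  have hFD : IsAddFundamentalDomain (AddSubgroup.zmultiples a) (Ioc 0 a) volume := by
    simpa using isAddFundamentalDomain_Ioc ha 0
  -- the equivalence ℤ ≃ zmultiples a
  have hinj : Function.Injective (fun l : ℤ => (⟨l • a, zsmul_mem_zmultiples a l⟩ : AddSubgroup.zmultiples a)) := by
    intro l₁ l₂ hl
    exact (zsmul_left_strictMono ha).injective (congrArg Subtype.val hl)
  have hsurj : Function.Surjective (fun l : ℤ => (⟨l • a, zsmul_mem_zmultiples a l⟩ : AddSubgroup.zmultiples a)) := by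
    rintro ⟨x, hx⟩
    obtain ⟨l, hl⟩ := AddSubgroup.mem_zmultiples_iff.mp hx
    exact ⟨l, Subtype.ext hl⟩
  set E : ℤ ≃ AddSubgroup.zmultiples a := Equiv.ofBijective _ ⟨hinj, hsurj⟩ with hE
  have hEcoe : ∀ l : ℤ, ((E l : AddSubgroup.zmultiples a) : ℝ) = l • a := fun l => rfl
  have hvadd : ∀ (γ : AddSubgroup.zmultiples a) (x : ℝ), (-γ : AddSubgroup.zmultiples a) +ᵥ x
      = x - (γ : ℝ) := by
    intro γ x
    show -(γ : ℝ) + x = x - (γ : ℝ)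
    ring
  -- key decomposition of the integral
  have hdecomp : ∫ x, h x = ∑' l : ℤ, ∫ x in Ioc 0 a, h (x - l • a) := by
    rw [hFD.integral_eq_tsum' h hInt, ← E.tsum_eq]
    refine tsum_congr fun l => ?_
    simp_rw [hvadd, hEcoe]
  have hterm : ∀ (l : ℤ) (x : ℝ), h (x - l • a) = e x * F (x - l • a) := by
    intro l x
    rw [hh, hper l x]
  -- measurability of terms
  have hmeas : ∀ l : ℤ, AEStronglyMeasurable (fun x => e x * F (x - l • a))
      (volume.restrict (Ioc 0 a)) := by
    intro l
    refine AEStronglyMeasurable.mul (hecont.aestronglyMeasurable.restrict) ?_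
    exact ((hFint.comp_sub_right (l • a)).aestronglyMeasurable).restrict
  -- the key finiteness for swapping sum and integral
  have hlin : ∑' l : ℤ, ∫⁻ x in Ioc 0 a, ‖e x * F (x - l • a)‖₊ ∂volume
      = ∫⁻ x, ‖h x‖₊ ∂volume := by
    rw [hFD.lintegral_eq_tsum' (fun x => ‖h x‖₊), ← E.tsum_eq]
    refine (tsum_congr fun l => ?_).symm
    refine lintegral_congr fun x => ?_
    rw [hvadd, hEcoe, hterm l x]
  have hfin : ∑' l : ℤ, ∫⁻ x in Ioc 0 a, ‖e x * F (x - l • a)‖₊ ∂volume ≠ ⊤ := by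
    rw [hlin]
    exact hInt.2.ne
  -- swap
  have hswap : ∫ x, h x = ∫ x in Ioc 0 a, e x * aInner a (g n) (g j) x := by
    rw [hdecomp]
    simp_rw [hterm]
    rw [← integral_tsum (μ := volume.restrict (Ioc 0 a))
      (f := fun (l : ℤ) (x : ℝ) => e x * F (x - l • a)) hmeas hfin]
    refine setIntegral_congr_fun measurableSet_Ioc fun x _ => ?_
    rw [tsum_mul_left]
    congr 1
    unfold aInner
    refine tsum_congr fun l => ?_
    rw [zsmul_eq_mul, hF]
  have hint_eq : ∫ x, e x * F x = ∫ x in Ioc 0 a, e x * aInner a (g n) (g j) x := by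
    rw [← funext hh] at *
    exact hswap
  rw [hint_eq]
  -- case analysis
  by_cases hnj : n = j
  · subst hnj
    have haen : ∀ᵐ x ∂(volume.restrict (Ioc 0 a)), e x * aInner a (g n) (g n) x = e x := by
      filter_upwards [ae_restrict_of_ae (hnorm n)] with x hx
      rw [hx, mul_one]
    rw [integral_congr_ae haen]
    by_cases hmk : m = k
    · have hc0 : c = 0 := by omega
      have he1 : ∀ x : ℝ, e x = 1 := by
        intro x
        rw [he, hc0]
        simp
      simp only [he1]
      rw [setIntegral_const, Real.volume_real_Ioc_of_le ha.le, sub_zero,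
        Complex.real_smul, mul_one, inv_mul_cancel₀ ha0]
      simp [hmk]
    · -- m ≠ k : the exponential integrates to zero
      have hcz : c ≠ 0 := by omega
      have hcne : (c : ℂ) ≠ 0 := Int.cast_ne_zero.mpr hcz
      have hpi : (Real.pi : ℂ) ≠ 0 := Complex.ofReal_ne_zero.mpr Real.pi_ne_zero
      have hwne : (2 * (Real.pi : ℂ) * Complex.I * ((c : ℂ) / a)) ≠ 0 :=
        mul_ne_zero (mul_ne_zero (mul_ne_zero two_ne_zero hpi) Complex.I_ne_zero)
          (div_ne_zero hcne ha0)
      have hzero : (∫ x in Ioc 0 a, e x ∂volume) = 0 := by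
        rw [← intervalIntegral.integral_of_le ha.le]
        rw [intervalIntegral.integral_congr (g := fun x : ℝ =>
          Complex.exp ((2 * (Real.pi : ℂ) * Complex.I * ((c : ℂ) / a)) * x))
          (fun x _ => he x)]
        rw [integral_exp_mul_complex hwne]
        have h1 : (2 * (Real.pi : ℂ) * Complex.I * ((c : ℂ) / a)) * (a : ℂ)
            = (c : ℂ) * (2 * Real.pi * Complex.I) := by
          field_simp
        rw [Complex.ofReal_zero, mul_zero, Complex.exp_zero, h1,
          Complex.exp_int_mul_two_pi_mul_I, sub_self, zero_div]
      rw [hzero, mul_zero, if_neg (fun hcon => hmk hcon.1)]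
  · have hae0 : ∀ᵐ x ∂(volume.restrict (Ioc 0 a)), e x * aInner a (g n) (g j) x = 0 := by
      filter_upwards [ae_restrict_of_ae (horth n j hnj)] with x hx
      rw [hx, mul_zero]
    rw [integral_congr_ae hae0, integral_zero, mul_zero]
    rw [if_neg (by tauto)]
end

section
/- Bessel's inequality for the a-inner product: if (g_n)_{n∈ℕ} is an a-orthonormal sequence in L²(ℝ), then for every f ∈ L²(ℝ), ∑_{n=1}^∞ |⟨f,g_n⟩_a(t)|² ≤ ⟨f,f⟩_a(t) for almost every t. -/
open MeasureTheory

open Set ENNReal NNReal in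
private lemma summable_fiber {a : ℝ} (ha : 0 < a) {h : ℝ → ℂ}
    (hm : Measurable h) (h2 : MemLp h 2 (volume : Measure ℝ)) :
    ∀ᵐ t : ℝ ∂volume, Summable (fun k : ℤ => (‖h (t - k * a)‖₊ ^ 2 : ℝ≥0)) := by
  set G : ℝ → ℝ≥0∞ := fun s => (‖h s‖₊ : ℝ≥0∞) ^ 2 with hGdef
  have hGm : Measurable G := hm.enorm.pow_const 2
  have hGint : ∫⁻ s, G s ∂volume < ⊤ := by
    have h22 : ∀ x : ℝ≥0∞, x ^ ((2 : ℝ≥0∞).toReal) = x ^ 2 := fun x => by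
      rw [ENNReal.toReal_ofNat, show (2:ℝ) = ((2:ℕ):ℝ) by norm_num, ENNReal.rpow_natCast]
    have := lintegral_rpow_enorm_lt_top_of_eLpNorm_lt_top (f := h) (μ := volume)
      two_ne_zero (by norm_num) h2.2
    simp only [h22] at this; exact this
  set F : ℝ → ℝ≥0∞ := fun t => ∑' k : ℤ, G (t - k * a) with hFdef
  have hFm : Measurable F :=
    Measurable.ennreal_tsum (fun k => hGm.comp (measurable_id.sub_const _))
  have key : ∀ c : ℝ, ∫⁻ t in Ioc c (c + a), F t ∂volume = ∫⁻ s, G s ∂volume := by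
    intro c
    have step1 : ∫⁻ t in Ioc c (c + a), F t ∂volume
        = ∑' k : ℤ, ∫⁻ t in Ioc c (c + a), G (t - k * a) ∂volume :=
      lintegral_tsum (fun k => (hGm.comp (measurable_id.sub_const _)).aemeasurable)
    have step2 : ∀ k : ℤ, ∫⁻ t in Ioc c (c + a), G (t - k * a) ∂volume
        = ∫⁻ s in Ioc (c + (-k) • a) (c + (-k + 1) • a), G s ∂volume := by
      intro k
      have hmp := measurePreserving_sub_right (volume : Measure ℝ) (k * a)
      have hpre := hmp.setLIntegral_comp_preimage
        (s := Ioc (c + (-k) • a) (c + (-k + 1) • a)) measurableSet_Ioc hGm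
      have e1 : c + (-k) • a + ↑k * a = c := by push_cast [zsmul_eq_mul]; ring
      have e2 : c + (-k + 1) • a + ↑k * a = c + a := by push_cast [zsmul_eq_mul]; ring
      rw [← hpre, Set.preimage_sub_const_Ioc, e1, e2]
    rw [step1]
    simp only [step2]
    have hre := (Equiv.neg ℤ).tsum_eq
      (fun m : ℤ => ∫⁻ s in Ioc (c + m • a) (c + (m + 1) • a), G s ∂volume)
    simp only [Equiv.neg_apply] at hre
    rw [show (∑' k : ℤ, ∫⁻ s in Ioc (c + (-k) • a) (c + (-k + 1) • a), G s ∂volume)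
        = ∑' k : ℤ, ∫⁻ s in Ioc (c + (-k) • a) (c + (-k + 1) • a), G s ∂volume from rfl]
    calc (∑' k : ℤ, ∫⁻ s in Ioc (c + (-k) • a) (c + (-k + 1) • a), G s ∂volume)
        = ∑' m : ℤ, ∫⁻ s in Ioc (c + m • a) (c + (m + 1) • a), G s ∂volume := hre
      _ = ∫⁻ s in ⋃ m : ℤ, Ioc (c + m • a) (c + (m + 1) • a), G s ∂volume :=
          (lintegral_iUnion (fun m => measurableSet_Ioc)
            (pairwise_disjoint_Ioc_add_zsmul c a) G).symm
      _ = ∫⁻ s, G s ∂volume := by rw [iUnion_Ioc_add_zsmul ha c, Measure.restrict_univ]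
  have hfin : ∀ j : ℤ, ∀ᵐ t : ℝ ∂volume, t ∈ Ioc ((0:ℝ) + j • a) ((0:ℝ) + j • a + a) →
      F t < ⊤ := by
    intro j
    rw [← ae_restrict_iff' measurableSet_Ioc]
    exact ae_lt_top hFm (by rw [key ((0:ℝ) + j • a)]; exact hGint.ne)
  filter_upwards [ae_all_iff.2 hfin] with t ht
  have hcov : ∃ j : ℤ, t ∈ Ioc ((0:ℝ) + j • a) ((0:ℝ) + (j + 1) • a) := by
    have hu := iUnion_Ioc_add_zsmul ha (0:ℝ)
    rw [eq_univ_iff_forall] at hu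
    simpa [mem_iUnion] using hu t
  obtain ⟨j, hj⟩ := hcov
  have hFt : F t < ⊤ := ht j (by rwa [add_zsmul, one_zsmul, ← add_assoc] at hj)
  have hne : (∑' k : ℤ, ((‖h (t - k * a)‖₊ ^ 2 : ℝ≥0) : ℝ≥0∞)) ≠ ⊤ := by
    have : F t ≠ ⊤ := hFt.ne
    simpa [hFdef, hGdef, ENNReal.coe_pow] using this
  exact ENNReal.tsum_coe_ne_top_iff_summable.mp hne

private lemma ae_eq_fiber {a : ℝ} {h h' : ℝ → ℂ} (he : h =ᵐ[volume] h') :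
    ∀ᵐ t : ℝ ∂volume, ∀ k : ℤ, h (t - k * a) = h' (t - k * a) := by
  rw [ae_all_iff]
  intro k
  have := (measurePreserving_sub_right (volume : Measure ℝ) (k * a)).quasiMeasurePreserving.ae_eq_comp he
  filter_upwards [this] with t ht using ht

/-- Bessel's inequality for the a-inner product. -/
theorem stmt10 (a : ℝ) (ha : 0 < a) (g : ℕ → ℝ → ℂ)
    (hg : ∀ n, MemLp (g n) 2 (volume : Measure ℝ))
    (horth : ∀ n k : ℕ, n ≠ k → ∀ᵐ t : ℝ ∂volume, aInner a (g n) (g k) t = 0)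
    (hnorm : ∀ n : ℕ, ∀ᵐ t : ℝ ∂volume,
      aInner a (g n) (g n) t ≠ 0 → aInner a (g n) (g n) t = 1)
    (f : ℝ → ℂ) (hf : MemLp f 2 (volume : Measure ℝ)) :
    ∀ᵐ t : ℝ ∂volume,
      ∑' n : ℕ, ‖aInner a f (g n) t‖ ^ 2 ≤ (aInner a f f t).re := by
  classical
  obtain ⟨f', hf'm, hff'⟩ : ∃ f', Measurable f' ∧ f =ᵐ[volume] f' :=
    ⟨hf.1.aemeasurable.mk f, hf.1.aemeasurable.measurable_mk, hf.1.aemeasurable.ae_eq_mk⟩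
  have hgexists : ∀ n, ∃ gn', Measurable gn' ∧ g n =ᵐ[volume] gn' := fun n =>
    ⟨(hg n).1.aemeasurable.mk (g n), (hg n).1.aemeasurable.measurable_mk,
      (hg n).1.aemeasurable.ae_eq_mk⟩
  choose g' hg'm hgg' using hgexists
  have hf2' : MemLp f' 2 (volume : Measure ℝ) := hf.ae_eq hff'
  have hg2' : ∀ n, MemLp (g' n) 2 (volume : Measure ℝ) := fun n => (hg n).ae_eq (hgg' n)
  have horthA : ∀ᵐ t : ℝ ∂volume, ∀ n k : ℕ, n ≠ k → aInner a (g n) (g k) t = 0 := by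
    rw [ae_all_iff]; intro n; rw [ae_all_iff]; intro k
    by_cases hnk : n = k
    · exact Filter.Eventually.of_forall (fun t h => absurd hnk h)
    · exact (horth n k hnk).mono fun t ht _ => ht
  filter_upwards [summable_fiber ha hf'm hf2',
    ae_all_iff.2 (fun n => summable_fiber ha (hg'm n) (hg2' n)),
    ae_eq_fiber (a := a) hff',
    ae_all_iff.2 (fun n => ae_eq_fiber (a := a) (hgg' n)),
    horthA, ae_all_iff.2 hnorm] with t hSf hSg hEf hEg horth' hnorm'
  -- build ℓ² vectors
  have hpow : ∀ x : ℝ, x ^ ((2 : ENNReal).toReal) = x ^ 2 := fun x => by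
    rw [ENNReal.toReal_ofNat, show (2:ℝ) = ((2:ℕ):ℝ) by norm_num, Real.rpow_natCast]
  have hmemf : Memℓp (fun k : ℤ => f (t - k * a)) 2 := by
    refine memℓp_gen ?_
    have h1 : Summable (fun k : ℤ => ‖f' (t - k * a)‖ ^ 2) := by
      have := NNReal.summable_coe.2 hSf
      simpa [NNReal.coe_pow] using this
    have h2 : Summable (fun k : ℤ => ‖f (t - k * a)‖ ^ 2) := by
      convert h1 using 2 with k
      rw [hEf k]
    simpa [hpow] using h2
  have hmemg : ∀ n, Memℓp (fun k : ℤ => g n (t - k * a)) 2 := by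
    intro n
    refine memℓp_gen ?_
    have h1 : Summable (fun k : ℤ => ‖g' n (t - k * a)‖ ^ 2) := by
      have := NNReal.summable_coe.2 (hSg n)
      simpa [NNReal.coe_pow] using this
    have h2 : Summable (fun k : ℤ => ‖g n (t - k * a)‖ ^ 2) := by
      convert h1 using 2 with k
      rw [hEg n k]
    simpa [hpow] using h2
  set U : lp (fun _ : ℤ => ℂ) 2 := ⟨fun k => f (t - k * a), hmemf⟩ with hU
  set V : ℕ → lp (fun _ : ℤ => ℂ) 2 := fun n => ⟨fun k => g n (t - k * a), hmemg n⟩ with hV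
  have hinner1 : ∀ n, aInner a f (g n) t = (inner ℂ (V n) U : ℂ) := by
    intro n
    rw [lp.inner_eq_tsum]
    exact tsum_congr fun k => by
      simp only [hU, hV, RCLike.inner_apply]
  have hinner2 : aInner a f f t = (inner ℂ U U : ℂ) := by
    rw [lp.inner_eq_tsum]
    exact tsum_congr fun k => by
      simp only [hU, RCLike.inner_apply]
  have hinner4 : ∀ n m, aInner a (g n) (g m) t = (inner ℂ (V m) (V n) : ℂ) := by
    intro n m
    rw [lp.inner_eq_tsum]
    exact tsum_congr fun k => by
      simp only [hV, RCLike.inner_apply]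
  set s : Set ℕ := {n | V n ≠ 0} with hs
  have honb : Orthonormal ℂ (fun i : s => V i) := by
    rw [orthonormal_iff_ite]
    intro i j
    by_cases hij : i = j
    · subst hij
      rw [if_pos rfl, ← hinner4 i i]
      apply hnorm' i
      rw [hinner4 i i]
      intro h0
      exact i.2 (inner_self_eq_zero.mp h0)
    · rw [if_neg hij, ← hinner4 j i]
      exact horth' j i (fun e => hij (Subtype.ext e.symm))
  have hbessel := Orthonormal.tsum_inner_products_le (x := U) honb
  have hsupp : Function.support (fun n : ℕ => ‖(inner ℂ (V n) U : ℂ)‖ ^ 2) ⊆ s := by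
    intro n hn
    simp only [Function.mem_support] at hn
    intro hV0
    apply hn
    rw [hV0, inner_zero_left]
    simp
  have hLHS : ∑' n : ℕ, ‖aInner a f (g n) t‖ ^ 2
      = ∑' i : s, ‖(inner ℂ (V i) U : ℂ)‖ ^ 2 := by
    rw [tsum_subtype_eq_of_support_subset hsupp]
    exact tsum_congr fun n => by rw [hinner1 n]
  have hRHS : (aInner a f f t).re = ‖U‖ ^ 2 := by
    rw [hinner2, ← inner_self_eq_norm_sq (𝕜 := ℂ) U]
    simp [RCLike.re_to_complex]
  rw [hLHS, hRHS]
  exact hbessel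
end

section
/- If g ∈ L²(ℝ) is a-bounded, i.e. ⟨g,g⟩_a ≤ B a.e. for some B > 0, then for every f ∈ L²(ℝ), the function ⟨f,g⟩_a restricted to [0,a] belongs to L²[0,a] with ‖⟨f,g⟩_a‖²_{L²[0,a]} ≤ B‖f‖²_{L²(ℝ)}, and moreover the function ⟨f,g⟩_a · g belongs to L²(ℝ) with ‖⟨f,g⟩_a · g‖²_{L²(ℝ)} ≤ B²‖f‖²_{L²(ℝ)}. -/
open MeasureTheory
open scoped ENNReal NNReal

section Aux

lemma mpSub (c : ℝ) : MeasurePreserving (fun t : ℝ => t - c) volume volume := by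
  simpa [sub_eq_add_neg] using measurePreserving_add_right (volume : Measure ℝ) (-c)

lemma unfold_lintegral {a : ℝ} (ha : 0 < a) (φ : ℝ → ℝ≥0∞) (hφ : AEMeasurable φ volume)
    (c : ℝ) :
    ∫⁻ t in Set.Ioc c (c + a), ∑' n : ℤ, φ (t - n * a) = ∫⁻ t, φ t := by
  have hcomp : ∀ d : ℝ, AEMeasurable (fun t => φ (t - d)) volume := fun d =>
    hφ.comp_quasiMeasurePreserving (mpSub d).quasiMeasurePreserving
  rw [lintegral_tsum fun n => ((hcomp _).restrict)]
  have h1 : ∀ n : ℤ, ∫⁻ t in Set.Ioc c (c + a), φ (t - n * a)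
      = ∫⁻ t in Set.Ioc (c + (-n) • a) (c + (-n + 1) • a), φ t := by
    intro n
    rw [(mpSub ((n : ℝ) * a)).setLIntegral_comp_emb
      (MeasurableEquiv.subRight ((n : ℝ) * a)).measurableEmbedding]
    congr 1
    have : (fun t : ℝ => t - (n : ℝ) * a) '' Set.Ioc c (c + a)
        = Set.Ioc (c - n * a) (c + a - n * a) := by
      simp [sub_eq_add_neg, Set.image_add_const_Ioc]
    rw [this]
    congr 1 <;> simp [zsmul_eq_mul] <;> ring
  simp_rw [h1]
  have h2 : ∑' n : ℤ, ∫⁻ t in Set.Ioc (c + -n • a) (c + (-n + 1) • a), φ t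
      = ∑' n : ℤ, ∫⁻ t in Set.Ioc (c + n • a) (c + (n + 1) • a), φ t :=
    (Equiv.neg ℤ).tsum_eq fun m : ℤ => ∫⁻ t in Set.Ioc (c + m • a) (c + (m + 1) • a), φ t
  rw [h2]
  rw [← lintegral_sum_measure]
  rw [← Measure.restrict_iUnion (Set.pairwise_disjoint_Ioc_add_zsmul c a)
    (fun n => measurableSet_Ioc)]
  rw [iUnion_Ioc_add_zsmul ha c, Measure.restrict_univ]

lemma coverR {a : ℝ} (ha : 0 < a) (t : ℝ) :
    ∃ k : ℤ, t ∈ Set.Ioc ((k : ℝ) * a) ((k : ℝ) * a + a) := by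
  have h := iUnion_Ioc_add_zsmul ha (0 : ℝ)
  have ht : t ∈ (Set.univ : Set ℝ) := trivial
  rw [← h] at ht
  obtain ⟨k, hk⟩ := Set.mem_iUnion.mp ht
  refine ⟨k, ?_⟩
  convert hk using 2
  · rfl
  all_goals · simp [zsmul_eq_mul] <;> push_cast <;> ring

lemma ae_tsum_lt_top {a : ℝ} (ha : 0 < a) (φ : ℝ → ℝ≥0∞) (hφ : AEMeasurable φ volume)
    (hfin : ∫⁻ t, φ t ≠ ⊤) :
    ∀ᵐ t : ℝ ∂volume, ∑' n : ℤ, φ (t - n * a) < ⊤ := by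
  have hcomp : ∀ d : ℝ, AEMeasurable (fun t => φ (t - d)) volume := fun d =>
    hφ.comp_quasiMeasurePreserving (mpSub d).quasiMeasurePreserving
  have hsum : AEMeasurable (fun t => ∑' n : ℤ, φ (t - n * a)) volume :=
    AEMeasurable.ennreal_tsum fun n => hcomp _
  have hk : ∀ k : ℤ, ∀ᵐ t : ℝ ∂volume,
      t ∈ Set.Ioc ((k : ℝ) * a) ((k : ℝ) * a + a) → ∑' n : ℤ, φ (t - n * a) < ⊤ := by
    intro k
    refine (ae_restrict_iff' measurableSet_Ioc).mp ?_
    refine ae_lt_top' hsum.restrict ?_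
    rw [unfold_lintegral ha φ hφ ((k : ℝ) * a)]
    exact hfin
  rw [← ae_all_iff] at hk
  filter_upwards [hk] with t ht
  obtain ⟨k, hkmem⟩ := coverR ha t
  exact ht k hkmem

lemma tsum_CS (x y : ℤ → ℝ≥0∞) :
    (∑' n, x n * y n) ^ 2 ≤ (∑' n, x n ^ 2) * (∑' n, y n ^ 2) := by
  have hpq : Real.HolderConjugate 2 2 := Real.HolderConjugate.two_two
  have h := ENNReal.lintegral_mul_le_Lp_mul_Lq (Measure.count : Measure ℤ) hpq
    (measurable_from_top (f := x)).aemeasurable (measurable_from_top (f := y)).aemeasurable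
  simp only [Pi.mul_apply, lintegral_count] at h
  have hsq : ∀ z : ℤ → ℝ≥0∞, ∑' n, z n ^ (2 : ℝ) = ∑' n, z n ^ 2 := by
    intro z
    refine tsum_congr fun n => ?_
    rw [show (2 : ℝ) = ((2 : ℕ) : ℝ) by norm_num, ENNReal.rpow_natCast]
  rw [hsq, hsq] at h
  calc (∑' n, x n * y n) ^ 2
      ≤ ((∑' n, x n ^ 2) ^ (1 / 2 : ℝ) * (∑' n, y n ^ 2) ^ (1 / 2 : ℝ)) ^ 2 :=
        pow_le_pow_left' h 2
    _ = (∑' n, x n ^ 2) * (∑' n, y n ^ 2) := by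
        rw [mul_pow]
        congr 1 <;>
        · rw [← ENNReal.rpow_natCast _ 2, ← ENNReal.rpow_mul]
          norm_num

end Aux

section Aux2

lemma memL2_iff {h : ℝ → ℂ} {μ : Measure ℝ} :
    MemLp h 2 μ ↔ AEStronglyMeasurable h μ ∧ ∫⁻ t, (‖h t‖₊ : ℝ≥0∞) ^ 2 ∂μ < ⊤ := by
  rw [MemLp, eLpNorm_eq_lintegral_rpow_enorm_toReal two_ne_zero ENNReal.ofNat_ne_top]
  simp only [enorm_eq_nnnorm]
  refine and_congr_right fun _ => ?_
  have h2 : (2 : ℝ≥0∞).toReal = (2 : ℝ) := by simp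
  rw [h2]
  have hx : ∀ z : ℝ≥0∞, z ^ (2 : ℝ) = z ^ 2 := fun z => by
    rw [show (2 : ℝ) = ((2 : ℕ) : ℝ) by norm_num, ENNReal.rpow_natCast]
  simp_rw [hx]
  rw [ENNReal.rpow_lt_top_iff_of_pos (by norm_num)]

lemma integral_sq_eq {h : ℝ → ℂ} {μ : Measure ℝ} (hm : AEStronglyMeasurable h μ) :
    ∫ t, ‖h t‖ ^ 2 ∂μ = (∫⁻ t, (‖h t‖₊ : ℝ≥0∞) ^ 2 ∂μ).toReal := by
  have hsm : AEStronglyMeasurable (fun t => ‖h t‖ ^ 2) μ := by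
    exact hm.norm.pow 2
  rw [integral_eq_lintegral_of_nonneg_ae (Filter.Eventually.of_forall fun t => sq_nonneg _) hsm]
  congr 1
  refine lintegral_congr fun t => ?_
  rw [ENNReal.ofReal_pow (norm_nonneg _), ofReal_norm, enorm_eq_nnnorm]

lemma enorm_aInner_le (a : ℝ) (f g : ℝ → ℂ) (t : ℝ) :
    (‖aInner a f g t‖₊ : ℝ≥0∞)
      ≤ ∑' n : ℤ, (‖f (t - n * a)‖₊ : ℝ≥0∞) * (‖g (t - n * a)‖₊ : ℝ≥0∞) := by
  have hterm : ∀ n : ℤ, ‖f (t - n * a) * (starRingEnd ℂ) (g (t - n * a))‖₊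
      = ‖f (t - n * a)‖₊ * ‖g (t - n * a)‖₊ := fun n => by
    rw [nnnorm_mul, RCLike.nnnorm_conj]
  have hrhs : ∑' n : ℤ, (‖f (t - n * a)‖₊ : ℝ≥0∞) * (‖g (t - n * a)‖₊ : ℝ≥0∞)
      = ∑' n : ℤ, ((‖f (t - n * a) * (starRingEnd ℂ) (g (t - n * a))‖₊ : ℝ≥0) : ℝ≥0∞) := by
    refine tsum_congr fun n => ?_
    rw [hterm n, ENNReal.coe_mul]
  rw [hrhs]
  by_cases hs : Summable fun n : ℤ => ‖f (t - n * a) * (starRingEnd ℂ) (g (t - n * a))‖₊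
  · rw [← ENNReal.coe_tsum hs]
    exact ENNReal.coe_le_coe.mpr (nnnorm_tsum_le hs)
  · have : ∑' n : ℤ, ((‖f (t - n * a) * (starRingEnd ℂ) (g (t - n * a))‖₊ : ℝ≥0) : ℝ≥0∞) = ⊤ := by
      by_contra hne
      exact hs (ENNReal.tsum_coe_ne_top_iff_summable.mp hne)
    rw [this]
    exact le_top

end Aux2

lemma amgm (x y : ℝ≥0∞) : x * y ≤ x ^ 2 + y ^ 2 := by
  rcases le_total x y with h | h
  · exact le_trans (mul_le_mul' h le_rfl) (le_trans (le_of_eq (pow_two y).symm) le_add_self)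
  · exact le_trans (mul_le_mul' le_rfl h) (le_trans (le_of_eq (pow_two x).symm) le_self_add)

/-- If g is a-bounded (`⟨g,g⟩_a ≤ B` a.e.), then `⟨f,g⟩_a ∈ L²[0,a]` with
`‖⟨f,g⟩_a‖² ≤ B‖f‖²`, and `⟨f,g⟩_a · g ∈ L²(ℝ)` with `‖⟨f,g⟩_a·g‖² ≤ B²‖f‖²`. -/
theorem stmt11 (a : ℝ) (ha : 0 < a) (g : ℝ → ℂ) (B : ℝ) (hB : 0 < B)
    (hg : MemLp g 2 (volume : Measure ℝ))
    (hbd : ∀ᵐ t : ℝ ∂volume, ∑' n : ℤ, ‖g (t - n * a)‖ ^ 2 ≤ B)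
    (f : ℝ → ℂ) (hf : MemLp f 2 (volume : Measure ℝ)) :
    MemLp (aInner a f g) 2 ((volume : Measure ℝ).restrict (Set.Ioc 0 a)) ∧
      (∫ t in Set.Ioc 0 a, ‖aInner a f g t‖ ^ 2) ≤ B * ∫ t : ℝ, ‖f t‖ ^ 2 ∧
      MemLp (fun t => aInner a f g t * g t) 2 (volume : Measure ℝ) ∧
      (∫ t : ℝ, ‖aInner a f g t * g t‖ ^ 2) ≤ B ^ 2 * ∫ t : ℝ, ‖f t‖ ^ 2 := by
  have hfm := hf.aestronglyMeasurable
  have hgm := hg.aestronglyMeasurable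
  have hfae : AEMeasurable (fun t : ℝ => (‖f t‖₊ : ℝ≥0∞) ^ 2) volume := hfm.enorm.pow_const 2
  have hgae : AEMeasurable (fun t : ℝ => (‖g t‖₊ : ℝ≥0∞) ^ 2) volume := hgm.enorm.pow_const 2
  have hIf : ∫⁻ t, (‖f t‖₊ : ℝ≥0∞) ^ 2 ≠ ⊤ := (memL2_iff.mp hf).2.ne
  have hIg : ∫⁻ t, (‖g t‖₊ : ℝ≥0∞) ^ 2 ≠ ⊤ := (memL2_iff.mp hg).2.ne
  have hFefin : ∀ᵐ t : ℝ ∂volume, ∑' n : ℤ, (‖f (t - n * a)‖₊ : ℝ≥0∞) ^ 2 < ⊤ :=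
    ae_tsum_lt_top ha _ hfae hIf
  have hGefin : ∀ᵐ t : ℝ ∂volume, ∑' n : ℤ, (‖g (t - n * a)‖₊ : ℝ≥0∞) ^ 2 < ⊤ :=
    ae_tsum_lt_top ha _ hgae hIg
  -- the a.e. bound in ℝ≥0∞ form
  have hGe : ∀ᵐ t : ℝ ∂volume,
      ∑' n : ℤ, (‖g (t - n * a)‖₊ : ℝ≥0∞) ^ 2 ≤ ENNReal.ofReal B := by
    filter_upwards [hGefin, hbd] with t h1 h2
    have hcoe : ∀ n : ℤ, ((‖g (t - n * a)‖₊ : ℝ≥0∞)) ^ 2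
        = ((‖g (t - n * a)‖₊ ^ 2 : ℝ≥0) : ℝ≥0∞) := fun n => by rw [ENNReal.coe_pow]
    have hsumm : Summable fun n : ℤ => ‖g (t - n * a)‖₊ ^ 2 := by
      apply ENNReal.tsum_coe_ne_top_iff_summable.mp
      rw [← tsum_congr hcoe]
      exact h1.ne
    calc ∑' n : ℤ, ((‖g (t - n * a)‖₊ : ℝ≥0∞)) ^ 2
        = ((∑' n : ℤ, ‖g (t - n * a)‖₊ ^ 2 : ℝ≥0) : ℝ≥0∞) := by
          rw [ENNReal.coe_tsum hsumm]; exact tsum_congr hcoe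
      _ = ENNReal.ofReal ((∑' n : ℤ, ‖g (t - n * a)‖₊ ^ 2 : ℝ≥0) : ℝ) :=
          ENNReal.ofReal_coe_nnreal.symm
      _ ≤ ENNReal.ofReal B := by
          apply ENNReal.ofReal_le_ofReal
          have hc : ((∑' n : ℤ, ‖g (t - n * a)‖₊ ^ 2 : ℝ≥0) : ℝ)
              = ∑' n : ℤ, ‖g (t - n * a)‖ ^ 2 := by
            rw [NNReal.coe_tsum]
            exact tsum_congr fun n => by push_cast; ring
          rw [hc]; exact h2
  -- pointwise Cauchy–Schwarz
  have hpt : ∀ t : ℝ, (‖aInner a f g t‖₊ : ℝ≥0∞) ^ 2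
      ≤ (∑' n : ℤ, (‖f (t - n * a)‖₊ : ℝ≥0∞) ^ 2)
        * (∑' n : ℤ, (‖g (t - n * a)‖₊ : ℝ≥0∞) ^ 2) := fun t =>
    le_trans (pow_le_pow_left' (enorm_aInner_le a f g t) 2) (tsum_CS _ _)
  -- measurability of aInner
  have htermm : ∀ n : ℤ, AEStronglyMeasurable
      (fun t : ℝ => f (t - n * a) * (starRingEnd ℂ) (g (t - n * a))) volume := by
    intro n
    have h1 : AEStronglyMeasurable (fun t : ℝ => f (t - (n : ℝ) * a)) volume :=
      hfm.comp_quasiMeasurePreserving (mpSub _).quasiMeasurePreserving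
    have h2 : AEStronglyMeasurable (fun t : ℝ => g (t - (n : ℝ) * a)) volume :=
      hgm.comp_quasiMeasurePreserving (mpSub _).quasiMeasurePreserving
    exact h1.mul (RCLike.continuous_conj.comp_aestronglyMeasurable h2)
  have hsummae : ∀ᵐ t : ℝ ∂volume,
      Summable fun n : ℤ => f (t - n * a) * (starRingEnd ℂ) (g (t - n * a)) := by
    filter_upwards [hFefin, hGefin] with t h1 h2
    apply Summable.of_nnnorm
    apply ENNReal.tsum_coe_ne_top_iff_summable.mp
    have hb : ∑' n : ℤ, ((‖f (t - n * a) * (starRingEnd ℂ) (g (t - n * a))‖₊ : ℝ≥0) : ℝ≥0∞)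
        ≤ (∑' n : ℤ, (‖f (t - n * a)‖₊ : ℝ≥0∞) ^ 2)
          + ∑' n : ℤ, (‖g (t - n * a)‖₊ : ℝ≥0∞) ^ 2 := by
      rw [← ENNReal.tsum_add]
      refine ENNReal.tsum_le_tsum fun n => ?_
      rw [nnnorm_mul, RCLike.nnnorm_conj, ENNReal.coe_mul]
      exact amgm _ _
    exact (lt_of_le_of_lt hb (ENNReal.add_lt_top.mpr ⟨h1, h2⟩)).ne
  have hicc : Filter.Tendsto (fun N : ℕ => Finset.Icc (-(N : ℤ)) (N : ℤ))
      Filter.atTop Filter.atTop := by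
    apply Filter.tendsto_atTop_finset_of_monotone
    · intro i j hij
      apply Finset.Icc_subset_Icc <;> omega
    · intro x
      exact ⟨x.natAbs, by simp only [Finset.mem_Icc]; omega⟩
  have hconv : ∀ᵐ t : ℝ ∂volume, Filter.Tendsto
      (fun N : ℕ => ∑ n ∈ Finset.Icc (-(N : ℤ)) (N : ℤ),
        f (t - n * a) * (starRingEnd ℂ) (g (t - n * a)))
      Filter.atTop (nhds (aInner a f g t)) := by
    filter_upwards [hsummae] with t ht
    exact Filter.Tendsto.comp
      (g := fun s : Finset ℤ => ∑ n ∈ s, f (t - n * a) * (starRingEnd ℂ) (g (t - n * a)))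
      ht.hasSum hicc
  have haesm : AEStronglyMeasurable (aInner a f g) volume :=
    aestronglyMeasurable_of_tendsto_ae Filter.atTop
      (fun N => Finset.aestronglyMeasurable_fun_sum _ fun n _ => htermm n) hconv
  -- unfold for f
  have hunf_f : ∫⁻ t in Set.Ioc (0 : ℝ) a, ∑' n : ℤ, (‖f (t - n * a)‖₊ : ℝ≥0∞) ^ 2
      = ∫⁻ t, (‖f t‖₊ : ℝ≥0∞) ^ 2 := by
    have h0 := unfold_lintegral ha (fun t => (‖f t‖₊ : ℝ≥0∞) ^ 2) hfae 0
    rwa [zero_add] at h0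
  -- key bound 1
  have key1 : ∫⁻ t in Set.Ioc (0 : ℝ) a, (‖aInner a f g t‖₊ : ℝ≥0∞) ^ 2
      ≤ ENNReal.ofReal B * ∫⁻ t, (‖f t‖₊ : ℝ≥0∞) ^ 2 := by
    have step : ∫⁻ t in Set.Ioc (0 : ℝ) a, (‖aInner a f g t‖₊ : ℝ≥0∞) ^ 2
        ≤ ∫⁻ t in Set.Ioc (0 : ℝ) a,
            ENNReal.ofReal B * ∑' n : ℤ, (‖f (t - n * a)‖₊ : ℝ≥0∞) ^ 2 := by
      refine lintegral_mono_ae ?_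
      filter_upwards [ae_restrict_of_ae hGe] with t hGt
      calc (‖aInner a f g t‖₊ : ℝ≥0∞) ^ 2
          ≤ (∑' n : ℤ, (‖f (t - n * a)‖₊ : ℝ≥0∞) ^ 2)
            * (∑' n : ℤ, (‖g (t - n * a)‖₊ : ℝ≥0∞) ^ 2) := hpt t
        _ ≤ (∑' n : ℤ, (‖f (t - n * a)‖₊ : ℝ≥0∞) ^ 2) * ENNReal.ofReal B :=
            mul_le_mul' le_rfl hGt
        _ = ENNReal.ofReal B * ∑' n : ℤ, (‖f (t - n * a)‖₊ : ℝ≥0∞) ^ 2 := mul_comm _ _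
    refine le_trans step ?_
    rw [lintegral_const_mul' _ _ ENNReal.ofReal_ne_top, hunf_f]
  -- key bound 2 (the product function)
  have hFemeas : AEMeasurable (fun t : ℝ => ∑' n : ℤ, (‖f (t - n * a)‖₊ : ℝ≥0∞) ^ 2) volume :=
    AEMeasurable.ennreal_tsum fun n =>
      hfae.comp_quasiMeasurePreserving (mpSub _).quasiMeasurePreserving
  have hprod_meas : AEMeasurable
      (fun t : ℝ => (∑' n : ℤ, (‖f (t - n * a)‖₊ : ℝ≥0∞) ^ 2) * (‖g t‖₊ : ℝ≥0∞) ^ 2) volume :=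
    hFemeas.mul hgae
  have hper : ∀ (t : ℝ) (m : ℤ),
      ∑' n : ℤ, (‖f (t - m * a - n * a)‖₊ : ℝ≥0∞) ^ 2
        = ∑' n : ℤ, (‖f (t - n * a)‖₊ : ℝ≥0∞) ^ 2 := by
    intro t m
    calc ∑' n : ℤ, (‖f (t - m * a - n * a)‖₊ : ℝ≥0∞) ^ 2
        = ∑' n : ℤ, (fun k : ℤ => (‖f (t - k * a)‖₊ : ℝ≥0∞) ^ 2) ((Equiv.addRight m) n) := by
          refine tsum_congr fun n => ?_
          simp only [Equiv.coe_addRight]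
          congr 2
          push_cast
          ring
      _ = _ := (Equiv.addRight m).tsum_eq fun k : ℤ => (‖f (t - k * a)‖₊ : ℝ≥0∞) ^ 2
  have hfold : ∫⁻ t, (∑' n : ℤ, (‖f (t - n * a)‖₊ : ℝ≥0∞) ^ 2) * (‖g t‖₊ : ℝ≥0∞) ^ 2
      = ∫⁻ t in Set.Ioc (0 : ℝ) a, (∑' n : ℤ, (‖f (t - n * a)‖₊ : ℝ≥0∞) ^ 2)
          * ∑' n : ℤ, (‖g (t - n * a)‖₊ : ℝ≥0∞) ^ 2 := by
    have h0 := unfold_lintegral ha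
      (fun t => (∑' n : ℤ, (‖f (t - n * a)‖₊ : ℝ≥0∞) ^ 2) * (‖g t‖₊ : ℝ≥0∞) ^ 2) hprod_meas 0
    rw [zero_add] at h0
    rw [← h0]
    refine lintegral_congr fun t => ?_
    calc ∑' n : ℤ, (∑' k : ℤ, (‖f (t - n * a - k * a)‖₊ : ℝ≥0∞) ^ 2)
            * (‖g (t - n * a)‖₊ : ℝ≥0∞) ^ 2
        = ∑' n : ℤ, (∑' k : ℤ, (‖f (t - k * a)‖₊ : ℝ≥0∞) ^ 2)
            * (‖g (t - n * a)‖₊ : ℝ≥0∞) ^ 2 :=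
          tsum_congr fun n => by rw [hper t n]
      _ = (∑' k : ℤ, (‖f (t - k * a)‖₊ : ℝ≥0∞) ^ 2)
            * ∑' n : ℤ, (‖g (t - n * a)‖₊ : ℝ≥0∞) ^ 2 := ENNReal.tsum_mul_left
  have key2 : ∫⁻ t, (‖aInner a f g t * g t‖₊ : ℝ≥0∞) ^ 2
      ≤ ENNReal.ofReal B * (ENNReal.ofReal B * ∫⁻ t, (‖f t‖₊ : ℝ≥0∞) ^ 2) := by
    have step1 : ∫⁻ t, (‖aInner a f g t * g t‖₊ : ℝ≥0∞) ^ 2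
        ≤ ∫⁻ t, ENNReal.ofReal B
            * ((∑' n : ℤ, (‖f (t - n * a)‖₊ : ℝ≥0∞) ^ 2) * (‖g t‖₊ : ℝ≥0∞) ^ 2) := by
      refine lintegral_mono_ae ?_
      filter_upwards [hGe] with t hGt
      have hsplit : (‖aInner a f g t * g t‖₊ : ℝ≥0∞) ^ 2
          = (‖aInner a f g t‖₊ : ℝ≥0∞) ^ 2 * (‖g t‖₊ : ℝ≥0∞) ^ 2 := by
        rw [nnnorm_mul]
        push_cast
        ring
      rw [hsplit]
      calc (‖aInner a f g t‖₊ : ℝ≥0∞) ^ 2 * (‖g t‖₊ : ℝ≥0∞) ^ 2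
          ≤ ((∑' n : ℤ, (‖f (t - n * a)‖₊ : ℝ≥0∞) ^ 2)
              * (∑' n : ℤ, (‖g (t - n * a)‖₊ : ℝ≥0∞) ^ 2)) * (‖g t‖₊ : ℝ≥0∞) ^ 2 :=
            mul_le_mul' (hpt t) le_rfl
        _ ≤ ((∑' n : ℤ, (‖f (t - n * a)‖₊ : ℝ≥0∞) ^ 2) * ENNReal.ofReal B)
              * (‖g t‖₊ : ℝ≥0∞) ^ 2 :=
            mul_le_mul' (mul_le_mul' le_rfl hGt) le_rfl
        _ = ENNReal.ofReal B
              * ((∑' n : ℤ, (‖f (t - n * a)‖₊ : ℝ≥0∞) ^ 2) * (‖g t‖₊ : ℝ≥0∞) ^ 2) := by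
            ring
    refine le_trans step1 ?_
    rw [lintegral_const_mul' _ _ ENNReal.ofReal_ne_top]
    refine mul_le_mul' le_rfl ?_
    rw [hfold]
    calc ∫⁻ t in Set.Ioc (0 : ℝ) a, (∑' n : ℤ, (‖f (t - n * a)‖₊ : ℝ≥0∞) ^ 2)
            * ∑' n : ℤ, (‖g (t - n * a)‖₊ : ℝ≥0∞) ^ 2
        ≤ ∫⁻ t in Set.Ioc (0 : ℝ) a,
            (∑' n : ℤ, (‖f (t - n * a)‖₊ : ℝ≥0∞) ^ 2) * ENNReal.ofReal B := by
          refine lintegral_mono_ae ?_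
          filter_upwards [ae_restrict_of_ae hGe] with t hGt
          exact mul_le_mul' le_rfl hGt
      _ = ENNReal.ofReal B * ∫⁻ t in Set.Ioc (0 : ℝ) a,
            ∑' n : ℤ, (‖f (t - n * a)‖₊ : ℝ≥0∞) ^ 2 := by
          rw [lintegral_mul_const' _ _ ENNReal.ofReal_ne_top, mul_comm]
      _ = ENNReal.ofReal B * ∫⁻ t, (‖f t‖₊ : ℝ≥0∞) ^ 2 := by rw [hunf_f]
  refine ⟨?_, ?_, ?_, ?_⟩
  · exact memL2_iff.mpr ⟨haesm.restrict, lt_of_le_of_lt key1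
      (ENNReal.mul_lt_top ENNReal.ofReal_lt_top hIf.lt_top)⟩
  · have e1 : ∫ t in Set.Ioc (0 : ℝ) a, ‖aInner a f g t‖ ^ 2
        = (∫⁻ t in Set.Ioc (0 : ℝ) a, (‖aInner a f g t‖₊ : ℝ≥0∞) ^ 2).toReal :=
      integral_sq_eq haesm.restrict
    have ef : ∫ t, ‖f t‖ ^ 2 = (∫⁻ t, (‖f t‖₊ : ℝ≥0∞) ^ 2).toReal := integral_sq_eq hfm
    rw [e1, ef]
    have h2 : (ENNReal.ofReal B * ∫⁻ t, (‖f t‖₊ : ℝ≥0∞) ^ 2).toReal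
        = B * (∫⁻ t, (‖f t‖₊ : ℝ≥0∞) ^ 2).toReal := by
      rw [ENNReal.toReal_mul, ENNReal.toReal_ofReal hB.le]
    exact le_trans (ENNReal.toReal_mono
      (ENNReal.mul_ne_top ENNReal.ofReal_ne_top hIf) key1) h2.le
  · exact memL2_iff.mpr ⟨haesm.mul hgm, lt_of_le_of_lt key2
      (ENNReal.mul_lt_top ENNReal.ofReal_lt_top
        (ENNReal.mul_lt_top ENNReal.ofReal_lt_top hIf.lt_top))⟩
  · have e2 : ∫ t, ‖aInner a f g t * g t‖ ^ 2
        = (∫⁻ t, (‖aInner a f g t * g t‖₊ : ℝ≥0∞) ^ 2).toReal :=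
      integral_sq_eq (haesm.mul hgm)
    have ef : ∫ t, ‖f t‖ ^ 2 = (∫⁻ t, (‖f t‖₊ : ℝ≥0∞) ^ 2).toReal := integral_sq_eq hfm
    rw [e2, ef]
    have h2 : (ENNReal.ofReal B * (ENNReal.ofReal B * ∫⁻ t, (‖f t‖₊ : ℝ≥0∞) ^ 2)).toReal
        = B ^ 2 * (∫⁻ t, (‖f t‖₊ : ℝ≥0∞) ^ 2).toReal := by
      rw [ENNReal.toReal_mul, ENNReal.toReal_mul, ENNReal.toReal_ofReal hB.le]
      ring
    exact le_trans (ENNReal.toReal_mono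
      (ENNReal.mul_ne_top ENNReal.ofReal_ne_top
        (ENNReal.mul_ne_top ENNReal.ofReal_ne_top hIf)) key2) h2.le
end

section
/- Fix g ∈ L²(ℝ) and a > 0. The linear operator L : L²(ℝ) → L¹[0,a] defined by L(f) = ⟨f,g⟩_a|_{[0,a]} is bounded with operator norm ‖L‖ = ‖g‖_{L²(ℝ)}. -/
open MeasureTheory
open scoped ENNReal NNReal

private lemma ofReal_norm_eq_coe_nnnorm {E : Type*} [SeminormedAddGroup E] (a : E) :
    ENNReal.ofReal ‖a‖ = (‖a‖₊ : ℝ≥0∞) := ofReal_norm a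

open Set in
private lemma tile_lemma {a : ℝ} (ha : 0 < a) (F : ℝ → ℝ≥0∞) (hF : AEMeasurable F volume) :
    ∫⁻ t in Set.Ioc 0 a, ∑' n : ℤ, F (t - n * a) = ∫⁻ t, F t := by
  refine Eq.symm ?_
  have hfd : IsAddFundamentalDomain (AddSubgroup.zmultiples a) (Ioc 0 a) volume := by
    simpa using isAddFundamentalDomain_Ioc ha 0 volume
  let e : ℤ ≃ AddSubgroup.zmultiples a :=
    Equiv.ofInjective (fun n : ℤ => n • a) (zsmul_left_strictMono ha).injective
  have he : ∀ n : ℤ, ((e n : AddSubgroup.zmultiples a) : ℝ) = n • a := fun n => by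
    simp [e, Equiv.ofInjective, Equiv.ofLeftInverse]; rfl
  calc ∫⁻ t, F t
      = ∑' (γ : AddSubgroup.zmultiples a), ∫⁻ x in Ioc 0 a, F (γ +ᵥ x) :=
        hfd.lintegral_eq_tsum'' F
    _ = ∑' (n : ℤ), ∫⁻ x in Ioc 0 a, F ((e n : ℝ) + x) := (e.tsum_eq _).symm
    _ = ∑' (n : ℤ), ∫⁻ x in Ioc 0 a, F (x - n * a) := by
        rw [← (Equiv.neg ℤ).tsum_eq]
        refine tsum_congr fun n => ?_
        simp only [Equiv.neg_apply, he, zsmul_eq_mul]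
        congr 1
        ext x
        congr 1
        push_cast
        ring
    _ = ∫⁻ x in Ioc 0 a, ∑' n : ℤ, F (x - n * a) := by
        refine (lintegral_tsum fun n => ?_).symm
        exact (hF.comp_quasiMeasurePreserving
          ((measurePreserving_sub_right volume ((n : ℝ) * a)).quasiMeasurePreserving.mono_left
            Measure.restrict_le_self.absolutelyContinuous))

private lemma aInner_enorm_le (a : ℝ) (f g : ℝ → ℂ) (t : ℝ) :
    ENNReal.ofReal ‖aInner a f g t‖ ≤
      ∑' n : ℤ, (‖f (t - n * a)‖₊ : ℝ≥0∞) * (‖g (t - n * a)‖₊ : ℝ≥0∞) := by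
  have hterm : ∀ n : ℤ,
      ‖f (t - n * a) * (starRingEnd ℂ) (g (t - n * a))‖₊
        = ‖f (t - n * a)‖₊ * ‖g (t - n * a)‖₊ := fun n => by
    rw [nnnorm_mul, RCLike.nnnorm_conj]
  by_cases hs : Summable (fun n : ℤ =>
      ‖f (t - n * a) * (starRingEnd ℂ) (g (t - n * a))‖₊)
  · rw [ofReal_norm_eq_coe_nnnorm]
    calc (‖aInner a f g t‖₊ : ℝ≥0∞)
        ≤ ((∑' n : ℤ, ‖f (t - n * a) * (starRingEnd ℂ) (g (t - n * a))‖₊ : ℝ≥0) : ℝ≥0∞) :=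
          ENNReal.coe_le_coe.2 (nnnorm_tsum_le hs)
      _ = ∑' n : ℤ, ((‖f (t - n * a) * (starRingEnd ℂ) (g (t - n * a))‖₊ : ℝ≥0) : ℝ≥0∞) :=
          ENNReal.coe_tsum hs
      _ = ∑' n : ℤ, (‖f (t - n * a)‖₊ : ℝ≥0∞) * (‖g (t - n * a)‖₊ : ℝ≥0∞) := by
          refine tsum_congr fun n => ?_
          rw [hterm n]; push_cast; ring
  · have htop : (∑' n : ℤ, (‖f (t - n * a)‖₊ : ℝ≥0∞) * (‖g (t - n * a)‖₊ : ℝ≥0∞)) = ⊤ := by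
      have : (∑' n : ℤ,
          ((‖f (t - n * a) * (starRingEnd ℂ) (g (t - n * a))‖₊ : ℝ≥0) : ℝ≥0∞)) = ⊤ := by
        by_contra h
        exact hs (ENNReal.tsum_coe_ne_top_iff_summable.1 h)
      rw [← this]
      refine tsum_congr fun n => ?_
      rw [hterm n]; push_cast; ring
    rw [htop]
    exact le_top

private lemma l2_lintegral {h : ℝ → ℂ} (hh : MemLp h 2 (volume : Measure ℝ)) :
    Integrable (fun t => ‖h t‖ ^ 2) (volume : Measure ℝ) ∧
      ∫⁻ t, ((‖h t‖₊ : ℝ≥0∞) * (‖h t‖₊ : ℝ≥0∞)) = ENNReal.ofReal (∫ t, ‖h t‖ ^ 2) := by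
  have hint : Integrable (fun t => ‖h t‖ ^ 2) (volume : Measure ℝ) := by
    have := hh.integrable_norm_rpow (by norm_num) (by norm_num)
    simpa [ENNReal.toReal_ofNat, Real.rpow_two] using this
  refine ⟨hint, ?_⟩
  rw [MeasureTheory.ofReal_integral_eq_lintegral_ofReal hint
    (Filter.Eventually.of_forall fun t => by positivity)]
  refine lintegral_congr fun t => ?_
  rw [← ofReal_norm_eq_coe_nnnorm, ← ENNReal.ofReal_mul (norm_nonneg _)]
  congr 1
  ring

/-- The operator `L f = ⟨f,g⟩_a : L²(ℝ) → L¹[0,a]` is bounded with norm `‖g‖_{L²(ℝ)}`: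
`‖g‖₂` is the least constant C such that `‖L f‖₁ ≤ C ‖f‖₂` for all f ∈ L²(ℝ). -/
theorem stmt12 (a : ℝ) (ha : 0 < a) (g : ℝ → ℂ)
    (hg : MemLp g 2 (volume : Measure ℝ)) :
    IsLeast
      {C : ℝ | 0 ≤ C ∧ ∀ f : ℝ → ℂ, MemLp f 2 (volume : Measure ℝ) →
        (∫ t in Set.Ioc 0 a, ‖aInner a f g t‖) ≤ C * Real.sqrt (∫ t : ℝ, ‖f t‖ ^ 2)}
      (Real.sqrt (∫ t : ℝ, ‖g t‖ ^ 2)) := by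
  obtain ⟨hgint, hglint⟩ := l2_lintegral hg
  set Ig : ℝ := ∫ t : ℝ, ‖g t‖ ^ 2 with hIg
  have hIg0 : 0 ≤ Ig := integral_nonneg fun t => by positivity
  have hFg : AEMeasurable (fun t => (‖g t‖₊ : ℝ≥0∞)) volume := hg.1.enorm
  constructor
  · refine ⟨Real.sqrt_nonneg _, fun f hf => ?_⟩
    obtain ⟨hfint, hflint⟩ := l2_lintegral hf
    set If : ℝ := ∫ t : ℝ, ‖f t‖ ^ 2 with hIf
    have hIf0 : 0 ≤ If := integral_nonneg fun t => by positivity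
    have hFf : AEMeasurable (fun t => (‖f t‖₊ : ℝ≥0∞)) volume := hf.1.enorm
    -- the dominating ENNReal bound
    have htile : ∫⁻ t in Set.Ioc 0 a,
        ∑' n : ℤ, ((‖f (t - n * a)‖₊ : ℝ≥0∞) * (‖g (t - n * a)‖₊ : ℝ≥0∞))
          = ∫⁻ t, (‖f t‖₊ : ℝ≥0∞) * (‖g t‖₊ : ℝ≥0∞) :=
      tile_lemma ha (fun t => (‖f t‖₊ : ℝ≥0∞) * (‖g t‖₊ : ℝ≥0∞)) (hFf.mul hFg)
    have hCS : ∫⁻ t, (‖f t‖₊ : ℝ≥0∞) * (‖g t‖₊ : ℝ≥0∞)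
        ≤ ENNReal.ofReal If ^ (1 / 2 : ℝ) * ENNReal.ofReal Ig ^ (1 / 2 : ℝ) := by
      have hconj : (2 : ℝ).HolderConjugate 2 := by
        rw [Real.holderConjugate_iff_eq_conjExponent] <;> norm_num
      have := ENNReal.lintegral_mul_le_Lp_mul_Lq volume hconj hFf hFg
      simp only [Pi.mul_apply] at this
      refine this.trans ?_
      have h1 : ∫⁻ t, (‖f t‖₊ : ℝ≥0∞) ^ (2 : ℝ) = ENNReal.ofReal If := by
        rw [← hflint]; exact lintegral_congr fun t => by rw [ENNReal.rpow_two, sq]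
      have h2 : ∫⁻ t, (‖g t‖₊ : ℝ≥0∞) ^ (2 : ℝ) = ENNReal.ofReal Ig := by
        rw [← hglint]; exact lintegral_congr fun t => by rw [ENNReal.rpow_two, sq]
      rw [h1, h2]
    have hBne : ENNReal.ofReal If ^ (1 / 2 : ℝ) * ENNReal.ofReal Ig ^ (1 / 2 : ℝ) ≠ ⊤ :=
      ENNReal.mul_ne_top
        (ENNReal.rpow_ne_top_of_nonneg (by norm_num) ENNReal.ofReal_ne_top)
        (ENNReal.rpow_ne_top_of_nonneg (by norm_num) ENNReal.ofReal_ne_top)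
    have hBtoReal :
        (ENNReal.ofReal If ^ (1 / 2 : ℝ) * ENNReal.ofReal Ig ^ (1 / 2 : ℝ)).toReal
          = Real.sqrt Ig * Real.sqrt If := by
      rw [ENNReal.toReal_mul, ← ENNReal.toReal_rpow, ← ENNReal.toReal_rpow,
        ENNReal.toReal_ofReal hIf0, ENNReal.toReal_ofReal hIg0,
        Real.sqrt_eq_rpow, Real.sqrt_eq_rpow]
      ring
    calc ∫ t in Set.Ioc 0 a, ‖aInner a f g t‖
        ≤ (∫⁻ t in Set.Ioc 0 a, ENNReal.ofReal ‖aInner a f g t‖).toReal := by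
          refine le_trans (le_abs_self _) ?_
          have := MeasureTheory.norm_integral_le_lintegral_norm
            (μ := volume.restrict (Set.Ioc 0 a)) (fun t => ‖aInner a f g t‖)
          simpa [Real.norm_eq_abs, abs_norm] using this
      _ ≤ (ENNReal.ofReal If ^ (1 / 2 : ℝ) * ENNReal.ofReal Ig ^ (1 / 2 : ℝ)).toReal := by
          refine ENNReal.toReal_mono hBne ?_
          refine le_trans (lintegral_mono fun t => aInner_enorm_le a f g t) ?_
          rw [htile]
          exact hCS
      _ = Real.sqrt Ig * Real.sqrt If := hBtoReal
  · rintro C ⟨hC0, hC⟩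
    have hkey := hC g hg
    -- compute the integral for f = g
    have hmeas : AEMeasurable
        (fun t => ∑' n : ℤ, ((‖g (t - n * a)‖₊ : ℝ≥0∞) * (‖g (t - n * a)‖₊ : ℝ≥0∞)))
        (volume.restrict (Set.Ioc 0 a)) := by
      refine AEMeasurable.ennreal_tsum fun n => ?_
      exact ((hFg.mul hFg).comp_quasiMeasurePreserving
        ((measurePreserving_sub_right volume ((n : ℝ) * a)).quasiMeasurePreserving.mono_left
          Measure.restrict_le_self.absolutelyContinuous))
    have htileg : ∫⁻ t in Set.Ioc 0 a,
        ∑' n : ℤ, ((‖g (t - n * a)‖₊ : ℝ≥0∞) * (‖g (t - n * a)‖₊ : ℝ≥0∞))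
          = ENNReal.ofReal Ig := by
      rw [tile_lemma ha (fun t => (‖g t‖₊ : ℝ≥0∞) * (‖g t‖₊ : ℝ≥0∞)) (hFg.mul hFg), hglint]
    have hfin : ∀ᵐ t ∂(volume.restrict (Set.Ioc 0 a)),
        (∑' n : ℤ, ((‖g (t - n * a)‖₊ : ℝ≥0∞) * (‖g (t - n * a)‖₊ : ℝ≥0∞))) < ⊤ := by
      refine ae_lt_top' hmeas ?_
      rw [htileg]
      exact ENNReal.ofReal_ne_top
    have hae : ∀ᵐ t ∂(volume.restrict (Set.Ioc 0 a)),
        ‖aInner a g g t‖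
          = (∑' n : ℤ, ((‖g (t - n * a)‖₊ : ℝ≥0∞) * (‖g (t - n * a)‖₊ : ℝ≥0∞))).toReal := by
      filter_upwards [hfin] with t ht
      set r : ℤ → ℝ := fun n => ‖g (t - n * a)‖ ^ 2 with hr
      have hrnn : ∀ n, 0 ≤ r n := fun n => by positivity
      have hterm : ∀ n : ℤ,
          (‖g (t - n * a)‖₊ : ℝ≥0∞) * (‖g (t - n * a)‖₊ : ℝ≥0∞) = ENNReal.ofReal (r n) := by
        intro n
        rw [← ofReal_norm_eq_coe_nnnorm, ← ENNReal.ofReal_mul (norm_nonneg _)]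
        congr 1
        rw [hr]; ring
      simp only [hterm] at ht ⊢
      have hsum : Summable r := by
        have h1 : (∑' n : ℤ, (((r n).toNNReal : ℝ≥0) : ℝ≥0∞)) ≠ ⊤ := by
          refine ne_of_lt ?_
          convert ht using 2 with n
          rfl
        have h2 := ENNReal.tsum_coe_ne_top_iff_summable.1 h1
        have h3 : Summable (fun n => (((r n).toNNReal : ℝ≥0) : ℝ)) := NNReal.summable_coe.2 h2
        refine h3.congr fun n => ?_
        simp [Real.coe_toNNReal _ (hrnn n)]
      have hAg : aInner a g g t = ((∑' n : ℤ, r n : ℝ) : ℂ) := by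
        rw [Complex.ofReal_tsum]
        refine tsum_congr fun n => ?_
        rw [Complex.mul_conj]
        congr 1
        simp [hr, Complex.normSq_eq_norm_sq]
      rw [hAg]
      rw [← ENNReal.ofReal_tsum_of_nonneg hrnn hsum, ENNReal.toReal_ofReal
        (tsum_nonneg hrnn)]
      rw [Complex.norm_real, Real.norm_eq_abs, abs_of_nonneg (tsum_nonneg hrnn)]
    have hIgeq : ∫ t in Set.Ioc 0 a, ‖aInner a g g t‖ = Ig := by
      rw [integral_congr_ae hae, integral_toReal hmeas hfin, htileg,
        ENNReal.toReal_ofReal hIg0]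
    rw [hIgeq] at hkey
    rcases eq_or_lt_of_le (Real.sqrt_nonneg Ig) with h0 | hpos
    · rw [← h0]; exact hC0
    · have : Real.sqrt Ig * Real.sqrt Ig ≤ C * Real.sqrt Ig := by
        rw [Real.mul_self_sqrt hIg0]; exact hkey
      exact le_of_mul_le_mul_right this hpos
end
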